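/- For any finite poset P and any positive integer k, the maximum total size of a family of k pairwise disjoint antichains equals the minimum over all chain partitions C of P of the sum over chains C in the partition of min(|C|, k). -/

import Mathlib

open Finset

namespace GK
set_option linter.unusedSectionVars false

open scoped Classical

variable {α : Type*} [Fintype α] [PartialOrder α]

/-- Vertices: `none` is the combined source/sink `⋆`; `some (inl x)` is the
"entry copy" of `x`, `some (inr x)` the "exit copy". -/
abbrev W (α : Type*) := Option (α ⊕ α)

def vS : W α := none
def vL (x : α) : W α := some (Sum.inl x)
def vR (x : α) : W α := some (Sum.inr x)

/-- Arcs of the network. -/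
def isArc : W α → W α → Prop
  | none, some (Sum.inl _) => True
  | some (Sum.inl x), some (Sum.inr y) => x = y
  | some (Sum.inr x), some (Sum.inl y) => x < y
  | some (Sum.inr _), none => True
  | _, _ => False

lemma not_isArc_and_rev : ∀ u v : W α, isArc u v → isArc v u → False := by
  rintro (_|(x|x)) (_|(y|y)) h1 h2 <;> simp [isArc] at h1 h2 <;> try exact h1
  · subst h1; exact lt_irrefl _ h2
  · subst h2; exact lt_irrefl _ h1

/-- Arc costs. -/
def wt (k : ℕ) : W α → W α → ℤ
  | none, some (Sum.inl _) => (k : ℤ)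
  | some (Sum.inl _), some (Sum.inr _) => -1
  | _, _ => 0

/-- Feasible flows. -/
structure Feas (k : ℕ) (f : W α → W α → ℤ) : Prop where
  nonneg : ∀ u v : W α, 0 ≤ f u v
  supp : ∀ u v : W α, ¬ isArc u v → f u v = 0
  cap : ∀ x : α, f (vL x) (vR x) ≤ 1
  cons : ∀ v : W α, ∑ u, f u v = ∑ u, f v u

def cost (k : ℕ) (f : W α → W α → ℤ) : ℤ := ∑ u, ∑ v, wt k u v * f u v

lemma zero_feas (k : ℕ) : Feas (α := α) k (fun _ _ => (0 : ℤ)) :=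
  ⟨fun _ _ => le_refl _, fun _ _ _ => rfl, fun _ => by norm_num, fun _ => by simp⟩

lemma cost_bdd (k : ℕ) {f : W α → W α → ℤ} (hf : Feas k f) :
    -((Fintype.card (W α)) ^ 2 : ℤ) ≤ cost k f := by
  have hterm : ∀ u v : W α, (-1 : ℤ) ≤ wt k u v * f u v := by
    intro u v
    by_cases ha : isArc u v
    · match u, v with
      | none, some (Sum.inl x) =>
        have := mul_nonneg (by positivity : (0:ℤ) ≤ (k:ℤ)) (hf.nonneg none (vL x))
        simpa [wt, vL] using le_trans (by norm_num) this
      | some (Sum.inl x), some (Sum.inr y) =>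
        have hxy : x = y := ha
        subst hxy
        have h1 := hf.cap x
        have : wt k (vL x) (vR x) * f (vL x) (vR x) = -(f (vL x) (vR x)) := by
          simp [wt, vL, vR]
        rw [show (some (Sum.inl x) : W α) = vL x from rfl,
          show (some (Sum.inr x) : W α) = vR x from rfl, this]
        omega
      | some (Sum.inr x), some (Sum.inl y) => simp [wt]
      | some (Sum.inr x), none => simp [wt]
    · rw [hf.supp u v ha]; norm_num
  have : ∀ u : W α, -(Fintype.card (W α) : ℤ) ≤ ∑ v, wt k u v * f u v := by
    intro u
    calc -(Fintype.card (W α) : ℤ) = ∑ _v : W α, (-1 : ℤ) := by simp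
    _ ≤ _ := Finset.sum_le_sum fun v _ => hterm u v
  calc -((Fintype.card (W α)) ^ 2 : ℤ) = ∑ _u : W α, -(Fintype.card (W α) : ℤ) := by
        simp; ring
  _ ≤ _ := Finset.sum_le_sum fun u _ => this u

lemma exists_min_flow (k : ℕ) : ∃ f : W α → W α → ℤ, Feas k f ∧
    ∀ g, Feas k g → cost (α := α) k f ≤ cost (α := α) k g := by
  have Hbdd : ∃ b : ℤ, ∀ z : ℤ, (∃ f : W α → W α → ℤ, Feas k f ∧ cost (α := α) k f = z) → b ≤ z :=
    ⟨-((Fintype.card (W α)) ^ 2 : ℤ), by rintro z ⟨f, hf, rfl⟩; exact cost_bdd k hf⟩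
  have Hinh : ∃ z : ℤ, (∃ f : W α → W α → ℤ, Feas k f ∧ cost (α := α) k f = z) :=
    ⟨cost k (fun (_ _ : W α) => (0:ℤ)), (fun (_ _ : W α) => (0:ℤ)), zero_feas k, rfl⟩
  obtain ⟨c, ⟨⟨f, hf, hfc⟩, hleast⟩⟩ := Int.exists_least_of_bdd Hbdd Hinh
  exact ⟨f, hf, fun g hg => hfc ▸ hleast _ ⟨g, hg, rfl⟩⟩

/-! ### Residual graph and walks -/

def isEl : W α → W α → Prop := fun u v => ∃ x : α, u = vL x ∧ v = vR x

def fwd (f : W α → W α → ℤ) (u v : W α) : Prop := isArc u v ∧ (isEl u v → f u v = 0)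
def bwd (f : W α → W α → ℤ) (u v : W α) : Prop := isArc v u ∧ 1 ≤ f v u
def radj (f : W α → W α → ℤ) (u v : W α) : Prop := fwd f u v ∨ bwd f u v

noncomputable def rwt (k : ℕ) (u v : W α) : ℤ := if isArc u v then wt k u v else - wt k v u

lemma rwt_of_isArc {k : ℕ} {u v : W α} (h : isArc u v) : rwt k u v = wt k u v := if_pos h

lemma rwt_of_not_isArc {k : ℕ} {u v : W α} (h : ¬ isArc u v) : rwt k u v = - wt k v u := if_neg h

noncomputable def wwt (k : ℕ) : List (W α) → ℤ
  | a :: b :: t => rwt k a b + wwt k (b :: t)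
  | _ => 0

lemma wwt_nil (k : ℕ) : wwt k ([] : List (W α)) = 0 := rfl
lemma wwt_single (k : ℕ) (a : W α) : wwt k [a] = 0 := rfl
lemma wwt_cons_cons (k : ℕ) (a b : W α) (t : List (W α)) :
    wwt k (a :: b :: t) = rwt k a b + wwt k (b :: t) := rfl

lemma wwt_append (k : ℕ) (l : List (W α)) (v : W α) (r : List (W α)) :
    wwt k (l ++ v :: r) = wwt k (l ++ [v]) + wwt k (v :: r) := by
  induction l with
  | nil => simp [wwt]
  | cons a t ih =>
    cases t with
    | nil =>
      cases r with
      | nil => simp [wwt]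
      | cons c r' => simp [wwt]
    | cons b t2 =>
      simp only [List.cons_append, wwt_cons_cons] at *
      omega

noncomputable def ind (u v : W α) : W α → W α → ℤ := fun a b => if a = u ∧ b = v then 1 else 0

noncomputable def fchi : List (W α) → W α → W α → ℤ
  | a :: b :: t => fun u v => (if isArc a b then ind u v a b else 0) + fchi (b :: t) u v
  | _ => fun _ _ => 0

noncomputable def bchi : List (W α) → W α → W α → ℤ
  | a :: b :: t => fun u v => (if isArc a b then 0 else ind v u a b) + bchi (b :: t) u v
  | _ => fun _ _ => 0

/- note: `ind u v a b = 1` iff `a = u ∧ b = v`, i.e. the step (a,b) equals the pair (u,v);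
for `bchi` the step `(a,b)` traversed backwards decrements the flow on `(b,a)`,
so the pair receiving the contribution is `(u,v) = (b,a)`, i.e. `ind v u a b`. -/

lemma ind_nonneg (u v a b : W α) : 0 ≤ ind u v a b := by
  unfold ind; split <;> norm_num

lemma ind_le_one (u v a b : W α) : ind u v a b ≤ 1 := by
  unfold ind; split <;> norm_num

lemma fchi_nil (u v : W α) : fchi [] u v = 0 := rfl
lemma fchi_single (a u v : W α) : fchi [a] u v = 0 := rfl
lemma fchi_cons_cons (a b : W α) (t : List (W α)) (u v : W α) :
    fchi (a :: b :: t) u v = (if isArc a b then ind u v a b else 0) + fchi (b :: t) u v := rfl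
lemma bchi_nil (u v : W α) : bchi [] u v = 0 := rfl
lemma bchi_single (a u v : W α) : bchi [a] u v = 0 := rfl
lemma bchi_cons_cons (a b : W α) (t : List (W α)) (u v : W α) :
    bchi (a :: b :: t) u v = (if isArc a b then 0 else ind v u a b) + bchi (b :: t) u v := rfl

lemma fchi_nonneg (l : List (W α)) (u v : W α) : 0 ≤ fchi l u v := by
  induction l with
  | nil => simp [fchi_nil]
  | cons a t ih =>
    cases t with
    | nil => simp [fchi_single]
    | cons b t2 =>
      rw [fchi_cons_cons]
      have h1 : (0:ℤ) ≤ (if isArc a b then ind u v a b else 0) := by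
        split
        · exact ind_nonneg _ _ _ _
        · exact le_refl 0
      have h2 := ih
      omega

lemma bchi_nonneg (l : List (W α)) (u v : W α) : 0 ≤ bchi l u v := by
  induction l with
  | nil => simp [bchi_nil]
  | cons a t ih =>
    cases t with
    | nil => simp [bchi_single]
    | cons b t2 =>
      rw [bchi_cons_cons]
      have h1 : (0:ℤ) ≤ (if isArc a b then 0 else ind v u a b) := by
        split
        · exact le_refl 0
        · exact ind_nonneg _ _ _ _
      have h2 := ih
      omega

lemma fchi_supp (l : List (W α)) (u v : W α) (h : ¬ isArc u v) : fchi l u v = 0 := by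
  induction l with
  | nil => rfl
  | cons a t ih =>
    cases t with
    | nil => rfl
    | cons b t2 =>
      rw [fchi_cons_cons, ih]
      split
      · rename_i ha
        unfold ind
        split
        · rename_i he; obtain ⟨rfl, rfl⟩ := he; exact absurd ha h
        · ring
      · ring

lemma bchi_supp {f : W α → W α → ℤ} (l : List (W α)) (hw : l.Chain' (radj f)) (u v : W α)
    (h : ¬ isArc u v) : bchi l u v = 0 := by
  induction l with
  | nil => rfl
  | cons a t ih =>
    cases t with
    | nil => rfl
    | cons b t2 =>
      obtain ⟨hab, hw2⟩ := List.isChain_cons_cons.mp hw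
      rw [bchi_cons_cons, ih hw2]
      split
      · ring
      · rename_i ha
        unfold ind
        split
        · rename_i he
          obtain ⟨rfl, rfl⟩ := he
          rcases hab with hfwd | hbwd
          · exact absurd hfwd.1 ha
          · exact absurd hbwd.1 h
        · ring

lemma dropLast_cons_cons (a b : W α) (t : List (W α)) :
    (a :: b :: t).dropLast = a :: (b :: t).dropLast := rfl

lemma fchi_zero_of_not_mem (l : List (W α)) (u v : W α) (h : u ∉ l.dropLast) :
    fchi l u v = 0 := by
  induction l with
  | nil => rfl
  | cons a t ih =>
    cases t with
    | nil => rfl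
    | cons b t2 =>
      rw [dropLast_cons_cons, List.mem_cons] at h
      push_neg at h
      rw [fchi_cons_cons, ih h.2]
      have hua : u ≠ a := h.1
      split
      · unfold ind
        split
        · rename_i he; exact absurd he.1.symm hua
        · ring
      · ring

lemma bchi_zero_of_not_mem (l : List (W α)) (u v : W α) (h : v ∉ l.dropLast) :
    bchi l u v = 0 := by
  induction l with
  | nil => rfl
  | cons a t ih =>
    cases t with
    | nil => rfl
    | cons b t2 =>
      rw [dropLast_cons_cons, List.mem_cons] at h
      push_neg at h
      rw [bchi_cons_cons, ih h.2]
      have hva : v ≠ a := h.1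
      split
      · ring
      · unfold ind
        split
        · rename_i he; exact absurd he.1.symm hva
        · ring

lemma fchi_le_one (l : List (W α)) (hnd : l.dropLast.Nodup) (u v : W α) :
    fchi l u v ≤ 1 := by
  induction l with
  | nil => simp [fchi_nil]
  | cons a t ih =>
    cases t with
    | nil => simp [fchi_single]
    | cons b t2 =>
      rw [dropLast_cons_cons] at hnd
      obtain ⟨hna, hnd2⟩ := List.nodup_cons.mp hnd
      rw [fchi_cons_cons]
      by_cases hu : u = a
      · subst hu
        rw [fchi_zero_of_not_mem _ _ _ hna]
        have : (if isArc u b then ind u v u b else 0) ≤ 1 := by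
          split
          · exact ind_le_one _ _ _ _
          · norm_num
        omega
      · have h0 : (if isArc a b then ind u v a b else 0) = 0 := by
          split
          · unfold ind
            split
            · rename_i he; exact absurd he.1.symm hu
            · rfl
          · rfl
        rw [h0]
        have := ih hnd2
        omega

lemma bchi_le_one (l : List (W α)) (hnd : l.dropLast.Nodup) (u v : W α) :
    bchi l u v ≤ 1 := by
  induction l with
  | nil => simp [bchi_nil]
  | cons a t ih =>
    cases t with
    | nil => simp [bchi_single]
    | cons b t2 =>
      rw [dropLast_cons_cons] at hnd
      obtain ⟨hna, hnd2⟩ := List.nodup_cons.mp hnd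
      rw [bchi_cons_cons]
      by_cases hv : v = a
      · subst hv
        rw [bchi_zero_of_not_mem _ _ _ hna]
        have : (if isArc v b then 0 else ind v u v b) ≤ 1 := by
          split
          · norm_num
          · exact ind_le_one _ _ _ _
        omega
      · have h0 : (if isArc a b then 0 else ind v u a b) = 0 := by
          split
          · rfl
          · unfold ind
            split
            · rename_i he; exact absurd he.1.symm hv
            · rfl
        rw [h0]
        have := ih hnd2
        omega

lemma fchi_pos_spec {f : W α → W α → ℤ} (l : List (W α)) (hw : l.Chain' (radj f)) (u v : W α)
    (hp : 1 ≤ fchi l u v) : isArc u v ∧ (isEl u v → f u v = 0) := by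
  induction l with
  | nil => simp [fchi_nil] at hp
  | cons a t ih =>
    cases t with
    | nil => simp [fchi_single] at hp
    | cons b t2 =>
      obtain ⟨hab, hw2⟩ := List.isChain_cons_cons.mp hw
      rw [fchi_cons_cons] at hp
      have h1 : (0:ℤ) ≤ (if isArc a b then ind u v a b else 0) := by
        split
        · exact ind_nonneg _ _ _ _
        · exact le_refl 0
      have h2 := fchi_nonneg (b :: t2) u v
      by_cases hc : 1 ≤ fchi (b :: t2) u v
      · exact ih hw2 hc
      · have hstep : (1:ℤ) ≤ (if isArc a b then ind u v a b else 0) := by omega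
        by_cases ha : isArc a b
        · rw [if_pos ha] at hstep
          have : a = u ∧ b = v := by
            by_contra hne
            rw [ind, if_neg hne] at hstep
            norm_num at hstep
          obtain ⟨rfl, rfl⟩ := this
          rcases hab with hfwd | hbwd
          · exact hfwd
          · exact absurd hbwd.1 (fun hh => not_isArc_and_rev _ _ ha hh)
        · rw [if_neg ha] at hstep; norm_num at hstep

lemma bchi_pos_spec {f : W α → W α → ℤ} (l : List (W α)) (hw : l.Chain' (radj f)) (u v : W α)
    (hp : 1 ≤ bchi l u v) : 1 ≤ f u v := by
  induction l with
  | nil => simp [bchi_nil] at hp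
  | cons a t ih =>
    cases t with
    | nil => simp [bchi_single] at hp
    | cons b t2 =>
      obtain ⟨hab, hw2⟩ := List.isChain_cons_cons.mp hw
      rw [bchi_cons_cons] at hp
      have h1 : (0:ℤ) ≤ (if isArc a b then 0 else ind v u a b) := by
        split
        · exact le_refl 0
        · exact ind_nonneg _ _ _ _
      have h2 := bchi_nonneg (b :: t2) u v
      by_cases hc : 1 ≤ bchi (b :: t2) u v
      · exact ih hw2 hc
      · have hstep : (1:ℤ) ≤ (if isArc a b then 0 else ind v u a b) := by omega
        by_cases ha : isArc a b
        · rw [if_pos ha] at hstep; norm_num at hstep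
        · rw [if_neg ha] at hstep
          have : a = v ∧ b = u := by
            by_contra hne
            rw [ind, if_neg hne] at hstep
            norm_num at hstep
          obtain ⟨rfl, rfl⟩ := this
          rcases hab with hfwd | hbwd
          · exact absurd hfwd.1 ha
          · exact hbwd.2

/-! ### chi balance, cost pairing, toggle -/

lemma sum_ind₁ (a b v : W α) : (∑ u, ind u v a b) = if b = v then 1 else 0 := by
  by_cases hb : b = v
  · subst hb
    rw [if_pos rfl]
    calc (∑ u, ind u b a b) = ∑ u, if a = u then 1 else 0 := by
          apply Finset.sum_congr rfl; intro u _; rw [ind]; by_cases h : a = u <;> simp [h]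
    _ = 1 := by rw [Finset.sum_ite_eq]; simp
  · rw [if_neg hb]
    apply Finset.sum_eq_zero; intro u _
    rw [ind, if_neg]; rintro ⟨-, rfl⟩; exact hb rfl

lemma sum_ind₂ (a b v : W α) : (∑ u, ind v u a b) = if a = v then 1 else 0 := by
  by_cases ha : a = v
  · subst ha
    rw [if_pos rfl]
    calc (∑ u, ind a u a b) = ∑ u, if b = u then 1 else 0 := by
          apply Finset.sum_congr rfl; intro u _; rw [ind]; by_cases h : b = u <;> simp [h]
    _ = 1 := by rw [Finset.sum_ite_eq]; simp
  · rw [if_neg ha]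
    apply Finset.sum_eq_zero; intro u _
    rw [ind, if_neg]; rintro ⟨rfl, -⟩; exact ha rfl

lemma chi_balance (l : List (W α)) (v : W α) :
    ((∑ u, (fchi l u v - bchi l u v)) - ∑ u, (fchi l v u - bchi l v u)) =
      (if l.getLast? = some v then 1 else 0) - (if l.head? = some v then 1 else 0) := by
  induction l with
  | nil => simp [fchi_nil, bchi_nil]
  | cons a t ih =>
    cases t with
    | nil => simp [fchi_single, bchi_single]
    | cons b t2 =>
      have e1 : (∑ u, (fchi (a :: b :: t2) u v - bchi (a :: b :: t2) u v)) =
          ((∑ u, ((if isArc a b then ind u v a b else 0) - (if isArc a b then 0 else ind v u a b)))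
            + ∑ u, (fchi (b :: t2) u v - bchi (b :: t2) u v)) := by
        rw [← Finset.sum_add_distrib]
        apply Finset.sum_congr rfl; intro u _
        rw [fchi_cons_cons, bchi_cons_cons]; ring
      have e2 : (∑ u, (fchi (a :: b :: t2) v u - bchi (a :: b :: t2) v u)) =
          ((∑ u, ((if isArc a b then ind v u a b else 0) - (if isArc a b then 0 else ind u v a b)))
            + ∑ u, (fchi (b :: t2) v u - bchi (b :: t2) v u)) := by
        rw [← Finset.sum_add_distrib]
        apply Finset.sum_congr rfl; intro u _
        rw [fchi_cons_cons, bchi_cons_cons]; ring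
      have e3 : (∑ u, ((if isArc a b then ind u v a b else 0) - (if isArc a b then 0 else ind v u a b)))
          - (∑ u, ((if isArc a b then ind v u a b else 0) - (if isArc a b then 0 else ind u v a b)))
          = (if b = v then 1 else 0) - (if a = v then 1 else 0) := by
        by_cases hab : isArc a b
        · simp only [hab, if_true, Finset.sum_sub_distrib, Finset.sum_const_zero,
            sum_ind₁, sum_ind₂]
          ring
        · simp only [hab, if_false, Finset.sum_sub_distrib, Finset.sum_const_zero,
            sum_ind₁, sum_ind₂]
          ring
      rw [e1, e2]
      have e4 : (a :: b :: t2).getLast? = (b :: t2).getLast? := List.getLast?_cons_cons ..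
      rw [e4]
      have := ih
      simp only [List.head?_cons, Option.some.injEq] at this ⊢
      omega

lemma sum_sum_ind (g : W α → W α → ℤ) (a b : W α) :
    (∑ u, ∑ v, g u v * ind u v a b) = g a b := by
  have h1 : ∀ u : W α, (∑ v, g u v * ind u v a b) = if a = u then g u b else 0 := by
    intro u
    by_cases ha : a = u
    · rw [if_pos ha]
      calc (∑ v, g u v * ind u v a b) = ∑ v, if b = v then g u v else 0 := by
            apply Finset.sum_congr rfl; intro v _
            rw [ind]
            by_cases hb : b = v <;> simp [ha, hb]
      _ = g u b := by rw [Finset.sum_ite_eq]; simp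
    · rw [if_neg ha]
      apply Finset.sum_eq_zero; intro v _
      rw [ind, if_neg]
      · ring
      · rintro ⟨rfl, -⟩; exact ha rfl
  rw [Finset.sum_congr rfl (fun u _ => h1 u), Finset.sum_ite_eq]
  simp

lemma sum_sum_ind' (g : W α → W α → ℤ) (a b : W α) :
    (∑ u, ∑ v, g u v * ind v u a b) = g b a := by
  have h1 : ∀ u : W α, (∑ v, g u v * ind v u a b) = if b = u then g u a else 0 := by
    intro u
    by_cases hb : b = u
    · rw [if_pos hb]
      calc (∑ v, g u v * ind v u a b) = ∑ v, if a = v then g u v else 0 := by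
            apply Finset.sum_congr rfl; intro v _
            rw [ind]
            by_cases ha : a = v <;> simp [ha, hb]
      _ = g u a := by rw [Finset.sum_ite_eq]; simp
    · rw [if_neg hb]
      apply Finset.sum_eq_zero; intro v _
      rw [ind, if_neg]
      · ring
      · rintro ⟨-, rfl⟩; exact hb rfl
  rw [Finset.sum_congr rfl (fun u _ => h1 u), Finset.sum_ite_eq]
  simp

lemma cost_chi {f : W α → W α → ℤ} (k : ℕ) (l : List (W α)) (hw : l.Chain' (radj f)) :
    (∑ u, ∑ v, wt k u v * (fchi l u v - bchi l u v)) = wwt k l := by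
  induction l with
  | nil => simp [fchi_nil, bchi_nil, wwt_nil]
  | cons a t ih =>
    cases t with
    | nil => simp [fchi_single, bchi_single, wwt_single]
    | cons b t2 =>
      obtain ⟨hab, hw2⟩ := List.isChain_cons_cons.mp hw
      have e1 : (∑ u, ∑ v, wt k u v * (fchi (a :: b :: t2) u v - bchi (a :: b :: t2) u v)) =
          ((∑ u, ∑ v, wt k u v *
            ((if isArc a b then ind u v a b else 0) - (if isArc a b then 0 else ind v u a b)))
          + ∑ u, ∑ v, wt k u v * (fchi (b :: t2) u v - bchi (b :: t2) u v)) := by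
        rw [← Finset.sum_add_distrib]
        apply Finset.sum_congr rfl; intro u _
        rw [← Finset.sum_add_distrib]
        apply Finset.sum_congr rfl; intro v _
        rw [fchi_cons_cons, bchi_cons_cons]; ring
      rw [e1, ih hw2, wwt_cons_cons]
      congr 1
      by_cases hisab : isArc a b
      · have : (∑ u, ∑ v, wt k u v *
            ((if isArc a b then ind u v a b else 0) - (if isArc a b then 0 else ind v u a b)))
            = ∑ u, ∑ v, wt k u v * ind u v a b := by
          apply Finset.sum_congr rfl; intro u _
          apply Finset.sum_congr rfl; intro v _
          rw [if_pos hisab, if_pos hisab]; ring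
        rw [this, sum_sum_ind, rwt_of_isArc hisab]
      · have : (∑ u, ∑ v, wt k u v *
            ((if isArc a b then ind u v a b else 0) - (if isArc a b then 0 else ind v u a b)))
            = ∑ u, ∑ v, -(wt k u v * ind v u a b) := by
          apply Finset.sum_congr rfl; intro u _
          apply Finset.sum_congr rfl; intro v _
          rw [if_neg hisab, if_neg hisab]; ring
        rw [this]
        rw [show (∑ u, ∑ v, -(wt k u v * ind v u a b)) = -(∑ u, ∑ v, wt k u v * ind v u a b) by
          rw [← Finset.sum_neg_distrib]; apply Finset.sum_congr rfl; intro u _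
          rw [← Finset.sum_neg_distrib]]
        rw [sum_sum_ind', rwt_of_not_isArc hisab]

lemma toggle_feas {k : ℕ} {f : W α → W α → ℤ} (hf : Feas k f) (l : List (W α))
    (hw : l.Chain' (radj f)) (hnd : l.dropLast.Nodup) (hcl : l.head? = l.getLast?) :
    Feas k (fun u v => f u v + (fchi l u v - bchi l u v)) := by
  constructor
  · intro u v
    have h1 := fchi_nonneg l u v
    have h2 := bchi_nonneg l u v
    have h3 := bchi_le_one l hnd u v
    have h4 := hf.nonneg u v
    show 0 ≤ f u v + (fchi l u v - bchi l u v)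
    by_cases hc : 1 ≤ bchi l u v
    · have := bchi_pos_spec l hw u v hc
      omega
    · omega
  · intro u v h
    have h1 := fchi_supp l u v h
    have h2 := bchi_supp l hw u v h
    have h3 := hf.supp u v h
    show f u v + (fchi l u v - bchi l u v) = 0
    rw [h1, h2, h3]; ring
  · intro x
    have h1 := fchi_le_one l hnd (vL x) (vR x)
    have h2 := bchi_nonneg l (vL x) (vR x)
    have h4 := hf.cap x
    show f (vL x) (vR x) + (fchi l (vL x) (vR x) - bchi l (vL x) (vR x)) ≤ 1
    by_cases hc : 1 ≤ fchi l (vL x) (vR x)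
    · have h5 := (fchi_pos_spec l hw _ _ hc).2 ⟨x, rfl, rfl⟩
      omega
    · have h6 := fchi_nonneg l (vL x) (vR x)
      omega
  · intro v
    have e1 : (∑ u, (f u v + (fchi l u v - bchi l u v))) =
        (∑ u, f u v) + ∑ u, (fchi l u v - bchi l u v) := by
      rw [← Finset.sum_add_distrib]
    have e2 : (∑ u, (f v u + (fchi l v u - bchi l v u))) =
        (∑ u, f v u) + ∑ u, (fchi l v u - bchi l v u) := by
      rw [← Finset.sum_add_distrib]
    show (∑ u, (f u v + (fchi l u v - bchi l u v))) = ∑ u, (f v u + (fchi l v u - bchi l v u))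
    rw [e1, e2, hf.cons v]
    have hb := chi_balance l v
    rw [hcl] at hb
    omega

lemma exists_split {β : Type*} (l : List β) (h : ¬ l.Nodup) :
    ∃ x p q r, l = p ++ x :: q ++ x :: r := by
  induction l with
  | nil => exact absurd List.nodup_nil h
  | cons a t ih =>
    by_cases ha : a ∈ t
    · obtain ⟨s, u, rfl⟩ := List.append_of_mem ha
      exact ⟨a, [], s, u, by simp⟩
    · have : ¬ t.Nodup := fun hn => h (List.nodup_cons.mpr ⟨ha, hn⟩)
      obtain ⟨x, p, q, r, rfl⟩ := ih this
      exact ⟨x, a :: p, q, r, by simp⟩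

lemma closed_walk_nonneg {k : ℕ} {f : W α → W α → ℤ} (hf : Feas k f)
    (hmin : ∀ g, Feas k g → cost (α := α) k f ≤ cost (α := α) k g) :
    ∀ (n : ℕ) (l : List (W α)), l.length ≤ n → l.Chain' (radj f) → l.head? = l.getLast? →
      0 ≤ wwt k l := by
  intro n
  induction n with
  | zero =>
    intro l hl _ _
    have : l = [] := List.length_eq_zero_iff.mp (Nat.le_zero.mp hl)
    subst this; rw [wwt_nil]
  | succ n ih =>
    intro l hl hw hcl
    by_cases hnd : l.dropLast.Nodup
    · by_contra hneg
      push_neg at hneg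
      have hfeas := toggle_feas hf l hw hnd hcl
      have hcost : cost (α := α) k (fun u v => f u v + (fchi l u v - bchi l u v)) =
          cost (α := α) k f + wwt k l := by
        unfold cost
        rw [← cost_chi k l hw, ← Finset.sum_add_distrib]
        apply Finset.sum_congr rfl; intro u _
        rw [← Finset.sum_add_distrib]
        apply Finset.sum_congr rfl; intro v _
        show wt k u v * (f u v + (fchi l u v - bchi l u v)) =
          wt k u v * f u v + wt k u v * (fchi l u v - bchi l u v)
        ring
      have := hmin _ hfeas
      rw [hcost] at this
      omega
    · obtain ⟨x, p, q, r, hsplit⟩ := exists_split _ hnd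
      have hlne : l ≠ [] := by
        rintro rfl
        simp at hsplit
      set L := l.getLast hlne with hL
      have hldecomp : l = p ++ ((x :: q) ++ (x :: (r ++ [L]))) := by
        conv_lhs => rw [← List.dropLast_append_getLast hlne]
        rw [hsplit]
        simp
        exact hL.symm
      have hchain := hw
      rw [hldecomp, List.Chain', List.isChain_append] at hchain
      obtain ⟨hcp, hc12, hcj⟩ := hchain
      rw [List.isChain_append] at hc12
      obtain ⟨hcA, hcB, hcAB⟩ := hc12
      -- w₁ := (x :: q) ++ [x]
      have hw1 : ((x :: q) ++ [x]).Chain' (radj f) := by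
        rw [List.Chain', List.isChain_append]
        refine ⟨hcA, List.isChain_singleton x, ?_⟩
        intro a ha b hb
        have hb' : x = b := by simpa using hb
        subst hb'
        exact hcAB a ha x rfl
      have hcl1 : ((x :: q) ++ [x]).head? = ((x :: q) ++ [x]).getLast? := by
        rw [List.head?_append_of_ne_nil _ (by simp : (x :: q) ≠ [])]
        rw [List.getLast?_append_of_ne_nil _ (by simp : ([x] : List (W α)) ≠ [])]
        rfl
      -- w₂ := p ++ (x :: (r ++ [L]))
      have hw2 : (p ++ (x :: (r ++ [L]))).Chain' (radj f) := by
        rw [List.Chain', List.isChain_append]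
        refine ⟨hcp, hcB, ?_⟩
        intro a ha b hb
        apply hcj a ha
        rw [List.head?_append_of_ne_nil _ (by simp : (x :: q) ≠ [])]
        simpa using hb
      have hgl : (p ++ (x :: (r ++ [L]))).getLast? = l.getLast? := by
        rw [List.getLast?_append_of_ne_nil _ (by simp : (x :: (r ++ [L])) ≠ [])]
        rw [hldecomp, List.getLast?_append_of_ne_nil _
          (by simp : ((x :: q) ++ (x :: (r ++ [L]))) ≠ [])]
        rw [List.getLast?_append_of_ne_nil _ (by simp : (x :: (r ++ [L])) ≠ [])]
      have hhd : (p ++ (x :: (r ++ [L]))).head? = l.head? := by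
        cases p with
        | nil => rw [hldecomp]; rfl
        | cons p0 pt =>
          rw [List.head?_append_of_ne_nil _ (by simp : (p0 :: pt) ≠ [])]
          rw [hldecomp, List.head?_append_of_ne_nil _ (by simp : (p0 :: pt) ≠ [])]
      have hcl2 : (p ++ (x :: (r ++ [L]))).head? = (p ++ (x :: (r ++ [L]))).getLast? := by
        rw [hgl, hhd, hcl]
      -- lengths
      have hlen : l.length = p.length + q.length + r.length + 3 := by
        rw [hldecomp]; simp; omega
      have hlen1 : ((x :: q) ++ [x]).length ≤ n := by
        have : ((x :: q) ++ [x]).length = q.length + 2 := by simp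
        omega
      have hlen2 : (p ++ (x :: (r ++ [L]))).length ≤ n := by
        have : (p ++ (x :: (r ++ [L]))).length = p.length + r.length + 2 := by simp; omega
        omega
      have h1 := ih _ hlen1 hw1 hcl1
      have h2 := ih _ hlen2 hw2 hcl2
      -- weight decomposition
      have hw_l : wwt k l =
          wwt k (p ++ [x]) + wwt k ((x :: q) ++ [x]) + wwt k (x :: (r ++ [L])) := by
        rw [hldecomp]
        rw [show (p ++ ((x :: q) ++ (x :: (r ++ [L])))) = p ++ (x :: (q ++ (x :: (r ++ [L])))) by
          simp]
        rw [wwt_append k p x (q ++ (x :: (r ++ [L])))]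
        rw [show (x :: (q ++ (x :: (r ++ [L])))) = ((x :: q) ++ (x :: (r ++ [L]))) by simp]
        rw [wwt_append k (x :: q) x (r ++ [L])]
        ring
      have hw_w2 : wwt k (p ++ (x :: (r ++ [L]))) = wwt k (p ++ [x]) + wwt k (x :: (r ++ [L])) :=
        wwt_append k p x (r ++ [L])
      rw [hw_l]
      rw [hw_w2] at h2
      omega

/-! ### Potentials -/

lemma wt_le (k : ℕ) (u v : W α) : wt k u v ≤ (k : ℤ) := by
  rcases u with _ | (x | x) <;> rcases v with _ | (y | y) <;> simp [wt] <;> omega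

lemma wt_ge (k : ℕ) (u v : W α) : (-1 : ℤ) ≤ wt k u v := by
  rcases u with _ | (x | x) <;> rcases v with _ | (y | y) <;> simp [wt] <;> omega

lemma rwt_ge (k : ℕ) (u v : W α) : -((k : ℤ) + 1) ≤ rwt k u v := by
  unfold rwt
  split
  · have := wt_ge k u v; omega
  · have := wt_le k v u; omega

lemma wwt_ge (k : ℕ) (l : List (W α)) : -((l.length : ℤ) * ((k : ℤ) + 1)) ≤ wwt k l := by
  induction l with
  | nil => simp [wwt_nil]
  | cons a t ih =>
    cases t with
    | nil =>
      rw [wwt_single]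
      have : (0:ℤ) ≤ ((([a] : List (W α)).length : ℤ)) * ((k:ℤ)+1) := by positivity
      omega
    | cons b t2 =>
      rw [wwt_cons_cons]
      have h1 := rwt_ge k a b
      have h2 : ((a :: b :: t2).length : ℤ) = ((b :: t2).length : ℤ) + 1 := by
        simp
      have h3 : ((b :: t2).length : ℤ) * ((k:ℤ)+1) + ((k:ℤ)+1) = ((a :: b :: t2).length : ℤ) * ((k:ℤ)+1) := by
        rw [h2]; ring
      omega

def IsSP (f : W α → W α → ℤ) (v : W α) (l : List (W α)) : Prop :=
  l.Chain' (radj f) ∧ l.head? = some (vS : W α) ∧ l.getLast? = some v ∧ l.Nodup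

lemma walk_to_simple {k : ℕ} {f : W α → W α → ℤ} (hf : Feas k f)
    (hmin : ∀ g, Feas k g → cost (α := α) k f ≤ cost (α := α) k g) :
    ∀ (n : ℕ) (l : List (W α)), l.length ≤ n → l.Chain' (radj f) →
      l.head? = some (vS : W α) → ∀ v, l.getLast? = some v →
      ∃ l', IsSP f v l' ∧ wwt k l' ≤ wwt k l := by
  intro n
  induction n with
  | zero =>
    intro l hl _ hh v _
    have : l = [] := List.length_eq_zero_iff.mp (Nat.le_zero.mp hl)
    subst this; simp at hh
  | succ n ih =>
    intro l hl hw hh v hlast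
    by_cases hnd : l.Nodup
    · exact ⟨l, ⟨hw, hh, hlast, hnd⟩, le_refl _⟩
    · obtain ⟨x, p, q, r, hldecomp⟩ := exists_split _ hnd
      rw [show (p ++ x :: q ++ x :: r) = p ++ ((x :: q) ++ (x :: r)) by simp] at hldecomp
      have hchain := hw
      rw [hldecomp, List.Chain', List.isChain_append] at hchain
      obtain ⟨hcp, hc12, hcj⟩ := hchain
      rw [List.isChain_append] at hc12
      obtain ⟨hcA, hcB, hcAB⟩ := hc12
      have hw2 : (p ++ (x :: r)).Chain' (radj f) := by
        rw [List.Chain', List.isChain_append]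
        refine ⟨hcp, hcB, ?_⟩
        intro a ha b hb
        apply hcj a ha
        rw [List.head?_append_of_ne_nil _ (by simp : (x :: q) ≠ [])]
        simpa using hb
      have hgl : (p ++ (x :: r)).getLast? = l.getLast? := by
        rw [List.getLast?_append_of_ne_nil _ (by simp : (x :: r) ≠ [])]
        rw [hldecomp, List.getLast?_append_of_ne_nil _
          (by simp : ((x :: q) ++ (x :: r)) ≠ [])]
        rw [List.getLast?_append_of_ne_nil _ (by simp : (x :: r) ≠ [])]
      have hhd : (p ++ (x :: r)).head? = l.head? := by
        cases p with
        | nil => rw [hldecomp]; rfl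
        | cons p0 pt =>
          rw [List.head?_append_of_ne_nil _ (by simp : (p0 :: pt) ≠ [])]
          rw [hldecomp, List.head?_append_of_ne_nil _ (by simp : (p0 :: pt) ≠ [])]
      have hlen2 : (p ++ (x :: r)).length ≤ n := by
        have e1 : l.length = p.length + q.length + r.length + 2 := by
          rw [hldecomp]; simp; omega
        have e2 : (p ++ (x :: r)).length = p.length + r.length + 1 := by simp; omega
        omega
      -- closed middle piece
      have hcl1 : ((x :: q) ++ [x]).head? = ((x :: q) ++ [x]).getLast? := by
        rw [List.head?_append_of_ne_nil _ (by simp : (x :: q) ≠ [])]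
        rw [List.getLast?_append_of_ne_nil _ (by simp : ([x] : List (W α)) ≠ [])]
        rfl
      have hw1 : ((x :: q) ++ [x]).Chain' (radj f) := by
        rw [List.Chain', List.isChain_append]
        refine ⟨hcA, List.isChain_singleton x, ?_⟩
        intro a ha b hb
        have hb' : x = b := by simpa using hb
        subst hb'
        exact hcAB a ha x rfl
      have hmid := closed_walk_nonneg hf hmin ((x :: q) ++ [x]).length _ le_rfl hw1 hcl1
      have hw_l : wwt k l = wwt k (p ++ [x]) + wwt k ((x :: q) ++ [x]) + wwt k (x :: r) := by
        rw [hldecomp]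
        rw [show (p ++ ((x :: q) ++ (x :: r))) = p ++ (x :: (q ++ (x :: r))) by simp]
        rw [wwt_append k p x (q ++ (x :: r))]
        rw [show (x :: (q ++ (x :: r))) = ((x :: q) ++ (x :: r)) by simp]
        rw [wwt_append k (x :: q) x r]
        ring
      have hw_w2 : wwt k (p ++ (x :: r)) = wwt k (p ++ [x]) + wwt k (x :: r) :=
        wwt_append k p x r
      obtain ⟨l', hsp, hle⟩ := ih (p ++ (x :: r)) hlen2 hw2 (hhd ▸ hh) v (hgl ▸ hlast)
      exact ⟨l', hsp, by omega⟩

/-- conservation, specialized -/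
lemma sum_W (g : W α → ℤ) : (∑ u, g u) = g (vS : W α) + ((∑ x, g (vL x)) + ∑ x, g (vR x)) := by
  rw [show (vS : W α) = none from rfl, Fintype.sum_option]
  congr 1
  rw [Fintype.sum_sum_type]
  rfl

lemma consL {k : ℕ} {f : W α → W α → ℤ} (hf : Feas k f) (x : α) :
    f (vS : W α) (vL x) + (∑ z, f (vR z) (vL x)) = f (vL x) (vR x) := by
  have h := hf.cons (vL x)
  rw [sum_W (fun u => f u (vL x)), sum_W (fun u => f (vL x) u)] at h
  have e1 : (∑ z, f (vL z) (vL x)) = 0 := by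
    apply Finset.sum_eq_zero; intro z _
    exact hf.supp _ _ (by simp [isArc, vL])
  have e2 : f (vL x) (vS : W α) = 0 := hf.supp _ _ (by simp [isArc, vL, vS])
  have e3 : (∑ z, f (vL x) (vL z)) = 0 := by
    apply Finset.sum_eq_zero; intro z _
    exact hf.supp _ _ (by simp [isArc, vL])
  have e4 : (∑ z, f (vL x) (vR z)) = f (vL x) (vR x) := by
    apply Finset.sum_eq_single_of_mem x (Finset.mem_univ x)
    intro z _ hz
    exact hf.supp _ _ (by simp [isArc, vL, vR]; exact Ne.symm hz)
  rw [e1, e2, e3, e4] at h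
  omega

lemma consR {k : ℕ} {f : W α → W α → ℤ} (hf : Feas k f) (x : α) :
    f (vL x) (vR x) = f (vR x) (vS : W α) + (∑ z, f (vR x) (vL z)) := by
  have h := hf.cons (vR x)
  rw [sum_W (fun u => f u (vR x)), sum_W (fun u => f (vR x) u)] at h
  have e1 : f (vS : W α) (vR x) = 0 := hf.supp _ _ (by simp [isArc, vR, vS])
  have e2 : (∑ z, f (vR z) (vR x)) = 0 := by
    apply Finset.sum_eq_zero; intro z _
    exact hf.supp _ _ (by simp [isArc, vR])
  have e3 : (∑ z, f (vL z) (vR x)) = f (vL x) (vR x) := by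
    apply Finset.sum_eq_single_of_mem x (Finset.mem_univ x)
    intro z _ hz
    exact hf.supp _ _ (by simp [isArc, vL, vR]; exact hz)
  have e4 : (∑ z, f (vR x) (vR z)) = 0 := by
    apply Finset.sum_eq_zero; intro z _
    exact hf.supp _ _ (by simp [isArc, vR])
  rw [e1, e2, e3, e4] at h
  omega

lemma el_zero_or_one {k : ℕ} {f : W α → W α → ℤ} (hf : Feas k f) (x : α) :
    f (vL x) (vR x) = 0 ∨ f (vL x) (vR x) = 1 := by
  have h1 := hf.nonneg (vL x) (vR x)
  have h2 := hf.cap x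
  omega

lemma reach_walk {k : ℕ} {f : W α → W α → ℤ} (hf : Feas k f) :
    ∀ v : W α, ∃ l : List (W α), l.Chain' (radj f) ∧ l.head? = some (vS : W α) ∧
      l.getLast? = some v := by
  have hVR : ∀ (n : ℕ) (x : α), (univ.filter (fun y => x < y)).card ≤ n →
      ∃ l : List (W α), l.Chain' (radj f) ∧ l.head? = some (vS : W α) ∧
        l.getLast? = some (vR x) := by
    intro n
    induction n with
    | zero =>
      intro x hx
      rcases el_zero_or_one hf x with h | h
      · refine ⟨[vS, vL x, vR x], ?_, rfl, rfl⟩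
        refine List.isChain_cons_cons.mpr ⟨Or.inl ⟨trivial, by rintro ⟨z, hz, -⟩; cases hz⟩, ?_⟩
        refine List.isChain_cons_cons.mpr ⟨Or.inl ⟨rfl, fun _ => h⟩, List.isChain_singleton _⟩
      · have hc := consR hf x
        have hnn := hf.nonneg (vR x) (vS : W α)
        by_cases hs : 1 ≤ f (vR x) (vS : W α)
        · refine ⟨[vS, vR x], ?_, rfl, rfl⟩
          refine List.isChain_cons_cons.mpr ⟨Or.inr ⟨trivial, hs⟩, List.isChain_singleton _⟩
        · exfalso
          have hsum : 1 ≤ (∑ z, f (vR x) (vL z)) := by omega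
          have : ∃ z, 0 < f (vR x) (vL z) := by
            by_contra hall
            push_neg at hall
            have : (∑ z, f (vR x) (vL z)) ≤ 0 := Finset.sum_nonpos (fun z _ => hall z)
            omega
          obtain ⟨z, hz⟩ := this
          have hxz : x < z := by
            by_contra hxz
            have := hf.supp (vR x) (vL z) (by simpa [isArc, vL, vR] using hxz)
            omega
          have : z ∈ univ.filter (fun y => x < y) := by simp [hxz]
          have := Finset.card_pos.mpr ⟨z, this⟩
          omega
    | succ n ih =>
      intro x hx
      rcases el_zero_or_one hf x with h | h
      · refine ⟨[vS, vL x, vR x], ?_, rfl, rfl⟩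
        refine List.isChain_cons_cons.mpr ⟨Or.inl ⟨trivial, by rintro ⟨z, hz, -⟩; cases hz⟩, ?_⟩
        refine List.isChain_cons_cons.mpr ⟨Or.inl ⟨rfl, fun _ => h⟩, List.isChain_singleton _⟩
      · have hc := consR hf x
        have hnn := hf.nonneg (vR x) (vS : W α)
        by_cases hs : 1 ≤ f (vR x) (vS : W α)
        · refine ⟨[vS, vR x], ?_, rfl, rfl⟩
          refine List.isChain_cons_cons.mpr ⟨Or.inr ⟨trivial, hs⟩, List.isChain_singleton _⟩
        · have hsum : 1 ≤ (∑ z, f (vR x) (vL z)) := by omega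
          have : ∃ z, 0 < f (vR x) (vL z) := by
            by_contra hall
            push_neg at hall
            have : (∑ z, f (vR x) (vL z)) ≤ 0 := Finset.sum_nonpos (fun z _ => hall z)
            omega
          obtain ⟨z, hz⟩ := this
          have hxz : x < z := by
            by_contra hxz
            have := hf.supp (vR x) (vL z) (by simpa [isArc, vL, vR] using hxz)
            omega
          have helz : f (vL z) (vR z) = 1 := by
            have hcz := consL hf z
            have h1 : f (vR x) (vL z) ≤ (∑ w, f (vR w) (vL z)) :=
              Finset.single_le_sum (fun w _ => hf.nonneg (vR w) (vL z)) (Finset.mem_univ x)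
            have h2 := hf.nonneg (vS : W α) (vL z)
            have h3 := hf.cap z
            omega
          have hsub : (univ.filter (fun y => z < y)).card < (univ.filter (fun y => x < y)).card := by
            apply Finset.card_lt_card
            constructor
            · intro w hw
              simp only [Finset.mem_filter, Finset.mem_univ, true_and] at hw ⊢
              exact lt_trans hxz hw
            · intro hsub
              have := hsub (by simp [hxz] : z ∈ univ.filter (fun y => x < y))
              simp at this
          obtain ⟨w, hwc, hwh, hwl⟩ := ih z (by omega)
          have hwne : w ≠ [] := by rintro rfl; simp at hwh
          refine ⟨w ++ [vL z, vR x], ?_, ?_, ?_⟩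
          · rw [List.Chain', List.isChain_append]
            refine ⟨hwc, ?_, ?_⟩
            · refine List.isChain_cons_cons.mpr ⟨Or.inr ⟨?_, by omega⟩, List.isChain_singleton _⟩
              show isArc (vR x) (vL z)
              simpa [isArc, vL, vR] using hxz
            · intro a ha b hb
              rw [hwl] at ha
              have hb' : vL z = b := by simpa using hb
              have ha' : vR z = a := by simpa using ha
              subst hb'; subst ha'
              exact Or.inr ⟨(rfl : isArc (vL z) (vR z)), by omega⟩
          · rw [List.head?_append_of_ne_nil _ hwne]; exact hwh
          · rw [List.getLast?_append_of_ne_nil _ (by simp : ([vL z, vR x] : List (W α)) ≠ [])]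
            rfl
  intro v
  match v with
  | none => exact ⟨[vS], List.isChain_singleton _, rfl, rfl⟩
  | some (Sum.inl x) =>
    refine ⟨[vS, vL x], ?_, rfl, rfl⟩
    refine List.isChain_cons_cons.mpr ⟨Or.inl ⟨trivial, by rintro ⟨z, hz, -⟩; cases hz⟩,
      List.isChain_singleton _⟩
  | some (Sum.inr x) => exact hVR _ x le_rfl

noncomputable def pot (k : ℕ) (f : W α → W α → ℤ) (v : W α) : ℤ :=
  if h : ∃ c : ℤ, (∃ l, IsSP f v l ∧ wwt k l = c) ∧
      ∀ c', (∃ l, IsSP f v l ∧ wwt k l = c') → c ≤ c' then h.choose else 0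

lemma pot_spec {k : ℕ} {f : W α → W α → ℤ} (hf : Feas k f)
    (hmin : ∀ g, Feas k g → cost (α := α) k f ≤ cost (α := α) k g) (v : W α) :
    (∃ l, IsSP f v l ∧ wwt k l = pot k f v) ∧
      ∀ l, IsSP f v l → pot k f v ≤ wwt k l := by
  have hne : ∃ l, IsSP f v l := by
    obtain ⟨l, hc, hh, hl⟩ := reach_walk hf v
    obtain ⟨l', hsp, -⟩ := walk_to_simple hf hmin l.length l le_rfl hc hh v hl
    exact ⟨l', hsp⟩
  have hbdd : ∃ b : ℤ, ∀ c : ℤ, (∃ l, IsSP f v l ∧ wwt k l = c) → b ≤ c := by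
    refine ⟨-((Fintype.card (W α) : ℤ) * ((k : ℤ) + 1)), ?_⟩
    rintro c ⟨l, hsp, rfl⟩
    have h1 := wwt_ge k l
    have h2 : l.length ≤ Fintype.card (W α) := List.Nodup.length_le_card hsp.2.2.2
    have h3 : ((l.length : ℤ)) * ((k:ℤ)+1) ≤ ((Fintype.card (W α) : ℤ)) * ((k:ℤ)+1) := by
      apply mul_le_mul_of_nonneg_right _ (by positivity)
      exact_mod_cast h2
    omega
  have hex : ∃ c : ℤ, (∃ l, IsSP f v l ∧ wwt k l = c) ∧
      ∀ c', (∃ l, IsSP f v l ∧ wwt k l = c') → c ≤ c' := by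
    obtain ⟨lb, hlb1, hlb2⟩ := Int.exists_least_of_bdd hbdd (by
      obtain ⟨l, hl⟩ := hne; exact ⟨wwt k l, l, hl, rfl⟩)
    exact ⟨lb, hlb1, hlb2⟩
  rw [pot, dif_pos hex]
  obtain ⟨h1, h2⟩ := hex.choose_spec
  exact ⟨h1, fun l hl => h2 _ ⟨l, hl, rfl⟩⟩

lemma pot_le_walk {k : ℕ} {f : W α → W α → ℤ} (hf : Feas k f)
    (hmin : ∀ g, Feas k g → cost (α := α) k f ≤ cost (α := α) k g) (v : W α)
    (l : List (W α)) (hc : l.Chain' (radj f)) (hh : l.head? = some (vS : W α))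
    (hl : l.getLast? = some v) : pot k f v ≤ wwt k l := by
  obtain ⟨l', hsp, hle⟩ := walk_to_simple hf hmin l.length l le_rfl hc hh v hl
  exact le_trans ((pot_spec hf hmin v).2 l' hsp) hle

lemma pot_vS {k : ℕ} {f : W α → W α → ℤ} (hf : Feas k f)
    (hmin : ∀ g, Feas k g → cost (α := α) k f ≤ cost (α := α) k g) :
    pot k f (vS : W α) = 0 := by
  have h1 : pot k f (vS : W α) ≤ 0 := by
    have := (pot_spec hf hmin (vS : W α)).2 [vS]
      ⟨List.isChain_singleton _, rfl, rfl, List.nodup_singleton _⟩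
    simpa [wwt_single] using this
  have h2 : 0 ≤ pot k f (vS : W α) := by
    obtain ⟨l, hsp, hw⟩ := (pot_spec hf hmin (vS : W α)).1
    rw [← hw]
    exact closed_walk_nonneg hf hmin l.length l le_rfl hsp.1 (hsp.2.1.trans hsp.2.2.1.symm)
  omega

lemma wwt_concat (k : ℕ) : ∀ (l : List (W α)) (h : l ≠ []) (v : W α),
    wwt k (l ++ [v]) = wwt k l + rwt k (l.getLast h) v := by
  intro l
  induction l with
  | nil => intro h; exact absurd rfl h
  | cons a t ih =>
    intro h v
    cases t with
    | nil => simp [wwt, List.getLast]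
    | cons b t2 =>
      have := ih (by simp) v
      rw [show ((a :: b :: t2) ++ [v]) = a :: ((b :: t2) ++ [v]) by simp]
      rw [show (a :: ((b :: t2) ++ [v])) = a :: b :: (t2 ++ [v]) by simp]
      rw [wwt_cons_cons, wwt_cons_cons]
      rw [show (b :: (t2 ++ [v])) = (b :: t2) ++ [v] by simp] at *
      rw [this]
      have : (a :: b :: t2).getLast h = (b :: t2).getLast (by simp) := by
        rw [List.getLast_cons]
      rw [this]
      ring

lemma pot_triangle {k : ℕ} {f : W α → W α → ℤ} (hf : Feas k f)
    (hmin : ∀ g, Feas k g → cost (α := α) k f ≤ cost (α := α) k g) {u v : W α}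
    (h : radj f u v) : pot k f v ≤ pot k f u + rwt k u v := by
  obtain ⟨l, hsp, hw⟩ := (pot_spec hf hmin u).1
  obtain ⟨hc, hh, hl, hnd⟩ := hsp
  have hlne : l ≠ [] := by rintro rfl; simp at hh
  have hgl : l.getLast hlne = u := by
    rw [List.getLast?_eq_getLast hlne] at hl
    exact Option.some_injective _ hl
  have hcw : (l ++ [v]).Chain' (radj f) := by
    rw [List.Chain', List.isChain_append]
    refine ⟨hc, List.isChain_singleton _, ?_⟩
    intro a ha b hb
    have ha' : u = a := by
      rw [List.getLast?_eq_getLast hlne] at ha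
      simpa [hgl] using ha
    have hb' : v = b := by simpa using hb
    subst ha'; subst hb'
    exact h
  have := pot_le_walk hf hmin v (l ++ [v]) hcw
    (by rw [List.head?_append_of_ne_nil _ hlne]; exact hh)
    (by rw [List.getLast?_append_of_ne_nil _ (by simp : ([v] : List (W α)) ≠ [])]; rfl)
  rw [wwt_concat k l hlne v, hgl, hw] at this
  exact this

/-! ### The dual certificate -/

section Certificate

variable {k : ℕ} {f : W α → W α → ℤ} (hf : Feas k f)
  (hmin : ∀ g, Feas k g → cost (α := α) k f ≤ cost (α := α) k g)

noncomputable def y1 (k : ℕ) (f : W α → W α → ℤ) (x : α) : ℤ := pot k f (vL x)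
noncomputable def y2 (k : ℕ) (f : W α → W α → ℤ) (x : α) : ℤ := pot k f (vR x)

include hf hmin

lemma A1 (x : α) : y1 k f x ≤ (k : ℤ) := by
  have h := pot_triangle hf hmin (u := (vS : W α)) (v := vL x)
    (Or.inl ⟨trivial, by rintro ⟨z, hz, -⟩; cases hz⟩)
  rw [pot_vS hf hmin] at h
  have : rwt k (vS : W α) (vL x) = (k : ℤ) := by
    rw [rwt_of_isArc (by trivial)]; rfl
  rw [this] at h
  simpa [y1] using h

lemma A2 (x : α) : 0 ≤ y2 k f x := by
  have h := pot_triangle hf hmin (u := vR x) (v := (vS : W α))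
    (Or.inl ⟨trivial, by rintro ⟨z, hz, -⟩; cases hz⟩)
  rw [pot_vS hf hmin] at h
  have : rwt k (vR x) (vS : W α) = 0 := by
    rw [rwt_of_isArc (by trivial)]; rfl
  rw [this] at h
  simpa [y2] using h

lemma A3 {x y : α} (hxy : x < y) : y1 k f y ≤ y2 k f x := by
  have h := pot_triangle hf hmin (u := vR x) (v := vL y)
    (Or.inl ⟨hxy, by rintro ⟨z, hz, -⟩; cases hz⟩)
  have : rwt k (vR x) (vL y) = 0 := by
    rw [rwt_of_isArc (show isArc (vR x) (vL y) from hxy)]; rfl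
  rw [this] at h
  simpa [y1, y2] using h

lemma A4 {x : α} (hx : f (vL x) (vR x) = 0) : y2 k f x ≤ y1 k f x - 1 := by
  have h := pot_triangle hf hmin (u := vL x) (v := vR x)
    (Or.inl ⟨rfl, fun _ => hx⟩)
  have : rwt k (vL x) (vR x) = -1 := by
    rw [rwt_of_isArc (show isArc (vL x) (vR x) from rfl)]; rfl
  rw [this] at h
  simp only [y1, y2]
  omega

lemma A5 {x : α} (hx : 1 ≤ f (vL x) (vR x)) : y1 k f x ≤ y2 k f x + 1 := by
  have h := pot_triangle hf hmin (u := vR x) (v := vL x)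
    (Or.inr ⟨rfl, hx⟩)
  have : rwt k (vR x) (vL x) = 1 := by
    rw [rwt_of_not_isArc (u := vR x) (v := vL x) (fun h => absurd h (lt_irrefl x))]; rfl
  rw [this] at h
  simpa [y1, y2] using h

lemma A6 {x : α} (hx : 1 ≤ f (vS : W α) (vL x)) : (k : ℤ) ≤ y1 k f x := by
  have h := pot_triangle hf hmin (u := vL x) (v := (vS : W α))
    (Or.inr ⟨trivial, hx⟩)
  rw [pot_vS hf hmin] at h
  have : rwt k (vL x) (vS : W α) = -(k : ℤ) := by
    rw [rwt_of_not_isArc (u := vL x) (v := (vS : W α)) (fun h => False.elim h)]; rfl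
  rw [this] at h
  simp only [y1]
  omega

lemma A7 {x y : α} (hx : 1 ≤ f (vR x) (vL y)) : y2 k f x ≤ y1 k f y := by
  have hxy : x < y := by
    by_contra hc
    have := hf.supp (vR x) (vL y) (by simpa [isArc, vL, vR] using hc)
    omega
  have h := pot_triangle hf hmin (u := vL y) (v := vR x)
    (Or.inr ⟨hxy, hx⟩)
  have : rwt k (vL y) (vR x) = 0 := by
    rw [rwt_of_not_isArc (by simpa [isArc, vL, vR] using (ne_of_gt hxy))]; rfl
  rw [this] at h
  simpa [y1, y2] using h

lemma A8 {x : α} (hx : 1 ≤ f (vR x) (vS : W α)) : y2 k f x ≤ 0 := by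
  have h := pot_triangle hf hmin (u := (vS : W α)) (v := vR x)
    (Or.inr ⟨trivial, hx⟩)
  rw [pot_vS hf hmin] at h
  have : rwt k (vS : W α) (vR x) = 0 := by
    rw [rwt_of_not_isArc (u := (vS : W α)) (v := vR x) (fun h => False.elim h)]; rfl
  rw [this] at h
  simpa [y2] using h

lemma src_le_one (x : α) : 0 ≤ f (vS : W α) (vL x) ∧ f (vS : W α) (vL x) ≤ 1 := by
  have h := consL hf x
  have h1 := hf.nonneg (vS : W α) (vL x)
  have h2 := hf.cap x
  have h3 : 0 ≤ ∑ z, f (vR z) (vL x) :=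
    Finset.sum_nonneg fun z _ => hf.nonneg _ _
  exact ⟨h1, by omega⟩

lemma counting :
    (k : ℤ) * (∑ x, f (vS : W α) (vL x)) ≤ ∑ x, f (vL x) (vR x) * (y1 k f x - y2 k f x) := by
  have e1 : (∑ x, f (vL x) (vR x) * y1 k f x) =
      (∑ x, f (vS : W α) (vL x) * y1 k f x) + ∑ x, ∑ z, f (vR z) (vL x) * y1 k f x := by
    rw [← Finset.sum_add_distrib]
    apply Finset.sum_congr rfl; intro x _
    rw [← consL hf x, add_mul, Finset.sum_mul]
  have e2 : (∑ x, f (vS : W α) (vL x) * y1 k f x) =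
      (k : ℤ) * (∑ x, f (vS : W α) (vL x)) := by
    rw [Finset.mul_sum]
    apply Finset.sum_congr rfl; intro x _
    obtain ⟨h0, h1⟩ := src_le_one hf hmin x
    rcases (by omega : f (vS : W α) (vL x) = 0 ∨ f (vS : W α) (vL x) = 1) with h | h
    · rw [h]; ring
    · rw [h, one_mul, mul_one]
      have := A1 hf hmin x
      have := A6 hf hmin (show 1 ≤ f (vS : W α) (vL x) by omega)
      omega
  have e3 : (∑ x, ∑ z, f (vR z) (vL x) * y1 k f x) =
      ∑ x, ∑ z, f (vR z) (vL x) * y2 k f z := by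
    apply Finset.sum_congr rfl; intro x _
    apply Finset.sum_congr rfl; intro z _
    rcases le_or_gt 1 (f (vR z) (vL x)) with h | h
    · have hzx : z < x := by
        by_contra hc
        have := hf.supp (vR z) (vL x) (by simpa [isArc, vL, vR] using hc)
        omega
      have h3 := A3 hf hmin hzx
      have h7 := A7 hf hmin h
      have : y1 k f x = y2 k f z := le_antisymm h3 h7
      rw [this]
    · have h0 := hf.nonneg (vR z) (vL x)
      have : f (vR z) (vL x) = 0 := by omega
      rw [this]; ring
  have e4 : (∑ x, ∑ z, f (vR z) (vL x) * y2 k f z) =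
      ∑ z, (f (vL z) (vR z) - f (vR z) (vS : W α)) * y2 k f z := by
    rw [Finset.sum_comm]
    apply Finset.sum_congr rfl; intro z _
    rw [← Finset.sum_mul]
    congr 1
    have := consR hf z
    omega
  have e5 : ∀ z : α, f (vR z) (vS : W α) * y2 k f z ≤ 0 := by
    intro z
    rcases le_or_gt 1 (f (vR z) (vS : W α)) with h | h
    · exact mul_nonpos_of_nonneg_of_nonpos (by omega) (A8 hf hmin h)
    · have h0 := hf.nonneg (vR z) (vS : W α)
      have : f (vR z) (vS : W α) = 0 := by omega
      rw [this]; ring_nf; exact le_refl 0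
  have key : (∑ x, f (vL x) (vR x) * y1 k f x) ≥
      (k : ℤ) * (∑ x, f (vS : W α) (vL x)) + ∑ z, f (vL z) (vR z) * y2 k f z := by
    rw [e1, e2, e3, e4]
    have : (∑ z, (f (vL z) (vR z) - f (vR z) (vS : W α)) * y2 k f z) =
        (∑ z, f (vL z) (vR z) * y2 k f z) - ∑ z, f (vR z) (vS : W α) * y2 k f z := by
      rw [← Finset.sum_sub_distrib]
      apply Finset.sum_congr rfl; intro z _
      ring
    rw [this]
    have h5 : (∑ z, f (vR z) (vS : W α) * y2 k f z) ≤ 0 :=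
      Finset.sum_nonpos fun z _ => e5 z
    omega
  have : (∑ x, f (vL x) (vR x) * (y1 k f x - y2 k f x)) =
      (∑ x, f (vL x) (vR x) * y1 k f x) - ∑ x, f (vL x) (vR x) * y2 k f x := by
    rw [← Finset.sum_sub_distrib]
    apply Finset.sum_congr rfl; intro x _
    ring
  omega

noncomputable def Sset (k : ℕ) (f : W α → W α → ℤ) : Finset α :=
  univ.filter (fun x => 1 ≤ y1 k f x - y2 k f x)

noncomputable def Vel (f : W α → W α → ℤ) : Finset α :=
  univ.filter (fun x => f (vL x) (vR x) = 1)

lemma card_Vel : ((Vel f).card : ℤ) = ∑ x, f (vL x) (vR x) := by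
  rw [Vel, ← Finset.sum_filter_add_sum_filter_not univ (fun x => f (vL x) (vR x) = 1)]
  have h1 : (∑ x ∈ univ.filter (fun x => f (vL x) (vR x) = 1), f (vL x) (vR x)) =
      ((univ.filter (fun x => f (vL x) (vR x) = 1)).card : ℤ) := by
    rw [Finset.sum_congr rfl (fun x hx => (Finset.mem_filter.mp hx).2)]
    simp
  have h2 : (∑ x ∈ univ.filter (fun x => ¬ f (vL x) (vR x) = 1), f (vL x) (vR x)) = 0 := by
    apply Finset.sum_eq_zero
    intro x hx
    have := (Finset.mem_filter.mp hx).2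
    rcases el_zero_or_one hf x with h | h
    · exact h
    · exact absurd h this
  omega

lemma card_compl_le :
    (((univ : Finset α) \ Sset k f).card : ℤ) ≤
      (∑ x, f (vL x) (vR x)) - (k : ℤ) * (∑ x, f (vS : W α) (vL x)) := by
  classical
  have hsub : (univ : Finset α) \ Sset k f ⊆ Vel f := by
    intro x hx
    rw [Finset.mem_sdiff, Sset, Finset.mem_filter] at hx
    have hnot : ¬ (1 ≤ y1 k f x - y2 k f x) := fun h => hx.2 ⟨Finset.mem_univ x, h⟩
    rw [Vel, Finset.mem_filter]
    refine ⟨Finset.mem_univ x, ?_⟩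
    rcases el_zero_or_one hf x with h | h
    · exact absurd (by have := A4 hf hmin h; omega) hnot
    · exact h
  have hVsum : (∑ x, f (vL x) (vR x) * (y1 k f x - y2 k f x)) =
      ∑ x ∈ Vel f, (y1 k f x - y2 k f x) := by
    rw [Vel, Finset.sum_filter]
    apply Finset.sum_congr rfl
    intro x _
    rcases el_zero_or_one hf x with h | h
    · rw [h]; norm_num
    · rw [h]; norm_num
  have hkey := counting hf hmin
  rw [hVsum] at hkey
  have hsplit := Finset.sum_filter_add_sum_filter_not (Vel f) (fun x => x ∈ Sset k f)
    (fun x => y1 k f x - y2 k f x)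
  have hb1 : (∑ x ∈ (Vel f).filter (fun x => x ∈ Sset k f), (y1 k f x - y2 k f x)) ≤
      (((Vel f).filter (fun x => x ∈ Sset k f)).card : ℤ) := by
    calc (∑ x ∈ (Vel f).filter (fun x => x ∈ Sset k f), (y1 k f x - y2 k f x)) ≤
        ∑ _x ∈ (Vel f).filter (fun x => x ∈ Sset k f), (1 : ℤ) := by
          apply Finset.sum_le_sum
          intro x hx
          have hxV := Finset.mem_filter.mp (Finset.mem_filter.mp hx).1
          have := A5 hf hmin (show 1 ≤ f (vL x) (vR x) by omega)
          omega
    _ = _ := by simp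
  have hb2 : (∑ x ∈ (Vel f).filter (fun x => ¬ x ∈ Sset k f), (y1 k f x - y2 k f x)) ≤ 0 := by
    apply Finset.sum_nonpos
    intro x hx
    have hxn := (Finset.mem_filter.mp hx).2
    rw [Sset, Finset.mem_filter] at hxn
    push_neg at hxn
    have := hxn (Finset.mem_univ x)
    omega
  have hcard1 : (k : ℤ) * (∑ x, f (vS : W α) (vL x)) ≤
      (((Vel f).filter (fun x => x ∈ Sset k f)).card : ℤ) := by omega
  have hcard2 : ((Vel f).filter (fun x => x ∈ Sset k f)).card +
      ((Vel f).filter (fun x => ¬ x ∈ Sset k f)).card = (Vel f).card :=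
    Finset.card_filter_add_card_filter_not _
  have hcard3 : ((univ : Finset α) \ Sset k f) = (Vel f).filter (fun x => ¬ x ∈ Sset k f) := by
    apply Finset.Subset.antisymm
    · intro x hx
      rw [Finset.mem_filter]
      exact ⟨hsub hx, (Finset.mem_sdiff.mp hx).2⟩
    · intro x hx
      rw [Finset.mem_sdiff]
      exact ⟨Finset.mem_univ x, (Finset.mem_filter.mp hx).2⟩
  have hVc := card_Vel (f := f) hf hmin
  rw [hcard3]
  omega

lemma Sset_chainfree (c : Finset α) (hc : c ⊆ Sset k f)
    (hch : IsChain (· ≤ ·) (c : Set α)) : c.card ≤ k := by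
  classical
  have hmono : ∀ x ∈ c, ∀ y ∈ c, x < y → y1 k f y < y1 k f x := by
    intro x hx y hy hxy
    have h3 := A3 hf hmin hxy
    have hxS := hc hx
    rw [Sset, Finset.mem_filter] at hxS
    omega
  have hmem : ∀ x ∈ c, y1 k f x ∈ Finset.Icc (1 : ℤ) (k : ℤ) := by
    intro x hx
    have hxS := hc hx
    rw [Sset, Finset.mem_filter] at hxS
    have h1 := A1 hf hmin x
    have h2 := A2 hf hmin x
    rw [Finset.mem_Icc]
    omega
  have hinj : Set.InjOn (y1 k f) (c : Set α) := by
    intro x hx y hy hxy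
    by_contra hne
    rcases hch hx hy hne with h | h
    · rcases lt_or_eq_of_le h with h' | h'
      · exact absurd hxy (ne_of_gt (hmono x hx y hy h'))
      · exact hne h'
    · rcases lt_or_eq_of_le h with h' | h'
      · exact absurd hxy.symm (ne_of_gt (hmono y hy x hx h'))
      · exact hne h'.symm
  have := Finset.card_le_card_of_injOn (y1 k f) (fun x hx => hmem x hx) hinj
  rwa [Int.card_Icc, show ((k : ℤ) + 1 - 1).toNat = k by omega] at this

end Certificate

/-! ### Decomposition of the flow into chains -/

section Decomp

variable {k : ℕ} {f : W α → W α → ℤ} (hf : Feas k f)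

include hf

lemma link_lt {z x : α} (h : 1 ≤ f (vR z) (vL x)) : z < x := by
  by_contra hc
  have := hf.supp (vR z) (vL x) (by simpa [isArc, vL, vR] using hc)
  omega

lemma sum_links_le_el (x : α) : (∑ z, f (vR z) (vL x)) ≤ f (vL x) (vR x) := by
  have h := consL hf x
  have := hf.nonneg (vS : W α) (vL x)
  omega

lemma sum_out_le_el (z : α) : (∑ x, f (vR z) (vL x)) ≤ f (vL z) (vR z) := by
  have h := consR hf z
  have := hf.nonneg (vR z) (vS : W α)
  omega

lemma pred_unique {z w x : α} (hz : 1 ≤ f (vR z) (vL x)) (hw : 1 ≤ f (vR w) (vL x)) : z = w := by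
  by_contra hne
  have h1 : f (vR z) (vL x) + f (vR w) (vL x) ≤ ∑ u, f (vR u) (vL x) := by
    calc f (vR z) (vL x) + f (vR w) (vL x)
        = ∑ u ∈ ({z, w} : Finset α), f (vR u) (vL x) := (Finset.sum_pair (f := fun u => f (vR u) (vL x)) hne).symm
    _ ≤ ∑ u, f (vR u) (vL x) := by
        apply Finset.sum_le_sum_of_subset_of_nonneg
        · intro u _; exact Finset.mem_univ u
        · intro u _ _; exact hf.nonneg _ _
  have h2 := sum_links_le_el hf x
  have h3 := hf.cap x
  omega

lemma succ_unique {z x y : α} (hx : 1 ≤ f (vR z) (vL x)) (hy : 1 ≤ f (vR z) (vL y)) : x = y := by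
  by_contra hne
  have h1 : f (vR z) (vL x) + f (vR z) (vL y) ≤ ∑ u, f (vR z) (vL u) := by
    calc f (vR z) (vL x) + f (vR z) (vL y)
        = ∑ u ∈ ({x, y} : Finset α), f (vR z) (vL u) := (Finset.sum_pair (f := fun u => f (vR z) (vL u)) hne).symm
    _ ≤ ∑ u, f (vR z) (vL u) := by
        apply Finset.sum_le_sum_of_subset_of_nonneg
        · intro u _; exact Finset.mem_univ u
        · intro u _ _; exact hf.nonneg _ _
  have h2 := sum_out_le_el hf z
  have h3 := hf.cap z
  omega

lemma link_el_left {z x : α} (h : 1 ≤ f (vR z) (vL x)) : f (vL z) (vR z) = 1 := by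
  have h1 : f (vR z) (vL x) ≤ ∑ u, f (vR z) (vL u) :=
    Finset.single_le_sum (fun u _ => hf.nonneg _ _) (Finset.mem_univ x)
  have h2 := sum_out_le_el hf z
  have h3 := hf.cap z
  omega

lemma link_el_right {z x : α} (h : 1 ≤ f (vR z) (vL x)) : f (vL x) (vR x) = 1 := by
  have h1 : f (vR z) (vL x) ≤ ∑ u, f (vR u) (vL x) :=
    Finset.single_le_sum (fun u _ => hf.nonneg _ _) (Finset.mem_univ z)
  have h2 := sum_links_le_el hf x
  have h3 := hf.cap x
  omega

omit hf

noncomputable def root (f : W α → W α → ℤ) : α → α :=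
  wellFounded_lt.fix (fun x ih =>
    if h : ∃ z, z < x ∧ 1 ≤ f (vR z) (vL x) then ih h.choose h.choose_spec.1 else x)

lemma root_eq (f : W α → W α → ℤ) (x : α) :
    root f x = if h : ∃ z, z < x ∧ 1 ≤ f (vR z) (vL x) then root f h.choose else x := by
  rw [root, WellFounded.fix_eq]

lemma root_eq_self {x : α} (h : ¬ ∃ z, z < x ∧ 1 ≤ f (vR z) (vL x)) : root f x = x := by
  rw [root_eq, dif_neg h]

include hf

lemma root_eq_pred {z x : α} (h : 1 ≤ f (vR z) (vL x)) : root f x = root f z := by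
  have hex : ∃ w, w < x ∧ 1 ≤ f (vR w) (vL x) := ⟨z, link_lt hf h, h⟩
  rw [root_eq, dif_pos hex]
  congr 1
  exact pred_unique hf hex.choose_spec.2 h

omit hf

lemma root_le (f : W α → W α → ℤ) (x : α) : root f x ≤ x := by
  induction x using WellFoundedLT.induction with
  | ind x ih =>
    by_cases h : ∃ z, z < x ∧ 1 ≤ f (vR z) (vL x)
    · rw [root_eq, dif_pos h]
      exact le_trans (ih h.choose h.choose_spec.1) (le_of_lt h.choose_spec.1)
    · rw [root_eq_self h]

lemma root_is_root (f : W α → W α → ℤ) (x : α) :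
    ¬ ∃ z, z < root f x ∧ 1 ≤ f (vR z) (vL (root f x)) := by
  induction x using WellFoundedLT.induction with
  | ind x ih =>
    by_cases h : ∃ z, z < x ∧ 1 ≤ f (vR z) (vL x)
    · rw [root_eq, dif_pos h]
      exact ih h.choose h.choose_spec.1
    · rw [root_eq_self h]
      exact h

lemma root_root (f : W α → W α → ℤ) (x : α) : root f (root f x) = root f x :=
  root_eq_self (root_is_root f x)

include hf

lemma root_el {x : α} (hx : f (vL x) (vR x) = 1) : f (vL (root f x)) (vR (root f x)) = 1 := by
  induction x using WellFoundedLT.induction with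
  | ind x ih =>
    by_cases h : ∃ z, z < x ∧ 1 ≤ f (vR z) (vL x)
    · rw [root_eq, dif_pos h]
      exact ih h.choose h.choose_spec.1 (link_el_left hf h.choose_spec.2)
    · rw [root_eq_self h]
      exact hx

lemma root_src {x : α} (hx : f (vL x) (vR x) = 1) :
    f (vS : W α) (vL (root f x)) = 1 := by
  have hel : f (vL (root f x)) (vR (root f x)) = 1 := root_el hf hx
  have hc := consL hf (root f x)
  have hsum : (∑ z, f (vR z) (vL (root f x))) = 0 := by
    by_contra hne
    have h0 : 0 ≤ ∑ z, f (vR z) (vL (root f x)) := Finset.sum_nonneg fun z _ => hf.nonneg _ _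
    have : ∃ z, 0 < f (vR z) (vL (root f x)) := by
      by_contra hall
      push_neg at hall
      have : (∑ z, f (vR z) (vL (root f x))) ≤ 0 := Finset.sum_nonpos (fun z _ => hall z)
      omega
    obtain ⟨z, hz⟩ := this
    exact root_is_root f x ⟨z, link_lt hf (by omega), by omega⟩
  omega

omit hf

/-- `InD f x y` : `x` lies on the predecessor path from `y` down to its root. -/
inductive InD (f : W α → W α → ℤ) : α → α → Prop
  | refl (y : α) : InD f y y
  | step {x z y : α} : 1 ≤ f (vR z) (vL y) → InD f x z → InD f x y

lemma InD.le (hf : Feas k f) {x y : α} (h : InD f x y) : x ≤ y := by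
  induction h with
  | refl => exact le_refl _
  | step hlink _ ih => exact le_trans ih (le_of_lt (link_lt hf hlink))

lemma root_mem_InD (hf : Feas k f) (x : α) : InD f (root f x) x := by
  induction x using WellFoundedLT.induction with
  | ind x ih =>
    by_cases h : ∃ z, z < x ∧ 1 ≤ f (vR z) (vL x)
    · rw [root_eq, dif_pos h]
      exact InD.step h.choose_spec.2 (ih h.choose h.choose_spec.1)
    · rw [root_eq_self h]
      exact InD.refl x

lemma InD_succ (hf : Feas k f) {p x : α} (h : InD f p x) :
    p ≠ x → ∃ w, 1 ≤ f (vR p) (vL w) ∧ InD f w x := by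
  induction h with
  | refl => intro hne; exact absurd rfl hne
  | step hlink hin ih =>
    rename_i z y
    intro hne
    by_cases hpz : p = z
    · subst hpz
      exact ⟨y, hlink, InD.refl y⟩
    · obtain ⟨w, hw1, hw2⟩ := ih hpz
      exact ⟨w, hw1, InD.step hlink hw2⟩

lemma InD_total (hf : Feas k f) : ∀ y x : α, root f x = root f y → InD f x y ∨ InD f y x := by
  intro y
  induction y using WellFoundedLT.induction with
  | ind y ih =>
    intro x hroot
    by_cases h : ∃ z, z < y ∧ 1 ≤ f (vR z) (vL y)
    · obtain ⟨py, hpy1, hpy2⟩ := h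
      have hry : root f y = root f py := root_eq_pred hf hpy2
      rcases ih py hpy1 x (by rw [hroot, hry]) with hc | hc
      · exact Or.inl (InD.step hpy2 hc)
      · by_cases hpx : py = x
        · subst hpx
          exact Or.inl (InD.step hpy2 (InD.refl _))
        · obtain ⟨w, hw1, hw2⟩ := InD_succ hf hc hpx
          have : w = y := succ_unique hf hw1 hpy2
          subst this
          exact Or.inr hw2
    · rw [root_eq_self h] at hroot
      exact Or.inr (hroot ▸ root_mem_InD hf x)

lemma same_root_comparable (hf : Feas k f) {x y : α} (h : root f x = root f y) :
    x ≤ y ∨ y ≤ x := by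
  rcases InD_total hf y x h with hc | hc
  · exact Or.inl (hc.le hf)
  · exact Or.inr (hc.le hf)

end Decomp

/-! ### The chain partition -/

section Partition

variable {k : ℕ} {f : W α → W α → ℤ} (hf : Feas k f)

noncomputable def chainOf (f : W α → W α → ℤ) (b : α) : Finset α :=
  univ.filter (fun x => f (vL x) (vR x) = 1 ∧ root f x = b)

noncomputable def Bset (f : W α → W α → ℤ) : Finset α :=
  univ.filter (fun b => f (vL b) (vR b) = 1 ∧ root f b = b)

noncomputable def Part (f : W α → W α → ℤ) : Finset (Finset α) :=
  (Bset f).image (chainOf f) ∪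
    (univ.filter (fun x => f (vL x) (vR x) = 0)).image (fun x => ({x} : Finset α))

include hf

lemma chainOf_chain (b : α) : IsChain (· ≤ ·) ((chainOf f b : Finset α) : Set α) := by
  intro x hx y hy hne
  simp only [Finset.coe_filter, Set.mem_setOf_eq, chainOf, Finset.mem_coe,
    Finset.mem_filter] at hx hy
  exact same_root_comparable hf (hx.2.2.trans hy.2.2.symm)

lemma part_isChain : ∀ C ∈ Part f, IsChain (· ≤ ·) (C : Set α) := by
  intro C hC
  rcases Finset.mem_union.mp hC with h | h
  · obtain ⟨b, _, rfl⟩ := Finset.mem_image.mp h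
    exact chainOf_chain hf b
  · obtain ⟨x, _, rfl⟩ := Finset.mem_image.mp h
    intro u hu v hv hne
    simp only [Finset.coe_singleton, Set.mem_singleton_iff] at hu hv
    exact absurd (hu.trans hv.symm) hne

lemma part_exists_unique (x : α) : ∃! C, C ∈ Part f ∧ x ∈ C := by
  by_cases hx : f (vL x) (vR x) = 1
  · refine ⟨chainOf f (root f x), ⟨?_, ?_⟩, ?_⟩
    · apply Finset.mem_union_left
      apply Finset.mem_image_of_mem
      rw [Bset, Finset.mem_filter]
      exact ⟨Finset.mem_univ _, root_el hf hx, root_root f x⟩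
    · rw [chainOf, Finset.mem_filter]
      exact ⟨Finset.mem_univ _, hx, rfl⟩
    · rintro C ⟨hC, hxC⟩
      rcases Finset.mem_union.mp hC with h | h
      · obtain ⟨b, _, rfl⟩ := Finset.mem_image.mp h
        rw [chainOf, Finset.mem_filter] at hxC
        rw [hxC.2.2]
      · obtain ⟨w, hw, rfl⟩ := Finset.mem_image.mp h
        rw [Finset.mem_singleton] at hxC
        subst hxC
        rw [Finset.mem_filter] at hw
        omega
  · have hx0 : f (vL x) (vR x) = 0 := by rcases el_zero_or_one hf x with h | h <;> omega
    refine ⟨{x}, ⟨?_, Finset.mem_singleton_self x⟩, ?_⟩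
    · apply Finset.mem_union_right
      apply Finset.mem_image_of_mem
      rw [Finset.mem_filter]
      exact ⟨Finset.mem_univ _, hx0⟩
    · rintro C ⟨hC, hxC⟩
      rcases Finset.mem_union.mp hC with h | h
      · obtain ⟨b, _, rfl⟩ := Finset.mem_image.mp h
        rw [chainOf, Finset.mem_filter] at hxC
        omega
      · obtain ⟨w, _, rfl⟩ := Finset.mem_image.mp h
        rw [Finset.mem_singleton] at hxC
        subst hxC
        rfl

lemma part_cost (hk : 0 < k) :
    (∑ C ∈ Part f, min C.card k) ≤ (Fintype.card α - (Vel f).card) + k * (Bset f).card := by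
  have hdisj : Disjoint ((Bset f).image (chainOf f))
      ((univ.filter (fun x => f (vL x) (vR x) = 0)).image (fun x => ({x} : Finset α))) := by
    rw [Finset.disjoint_left]
    rintro C hC1 hC2
    obtain ⟨b, hb, rfl⟩ := Finset.mem_image.mp hC1
    obtain ⟨x, hx, heq⟩ := Finset.mem_image.mp hC2
    rw [Bset, Finset.mem_filter] at hb
    rw [Finset.mem_filter] at hx
    have hbmem : b ∈ chainOf f b := by
      rw [chainOf, Finset.mem_filter]
      exact ⟨Finset.mem_univ _, hb.2.1, hb.2.2⟩
    rw [← heq, Finset.mem_singleton] at hbmem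
    subst hbmem
    omega
  rw [Part, Finset.sum_union hdisj]
  have h1 : (∑ C ∈ (Bset f).image (chainOf f), min C.card k) ≤ k * (Bset f).card := by
    rw [Finset.sum_image ?inj]
    case inj =>
      intro b hb b' hb' heq
      rw [Bset, Finset.mem_coe, Finset.mem_filter] at hb hb'
      have : b ∈ chainOf f b' := by
        rw [← heq, chainOf, Finset.mem_filter]
        exact ⟨Finset.mem_univ _, hb.2.1, hb.2.2⟩
      rw [chainOf, Finset.mem_filter] at this
      rw [← this.2.2, hb.2.2]
    calc (∑ b ∈ Bset f, min (chainOf f b).card k) ≤ ∑ _b ∈ Bset f, k :=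
          Finset.sum_le_sum (fun b _ => min_le_right _ _)
    _ = k * (Bset f).card := by rw [Finset.sum_const, smul_eq_mul, mul_comm]
  have h2 : (∑ C ∈ (univ.filter (fun x => f (vL x) (vR x) = 0)).image (fun x => ({x} : Finset α)),
      min C.card k) = Fintype.card α - (Vel f).card := by
    rw [Finset.sum_image (fun x _ y _ h => Finset.singleton_injective h)]
    have hval : ∀ x, min ({x} : Finset α).card k = 1 := by
      intro x
      rw [Finset.card_singleton]
      omega
    rw [Finset.sum_congr rfl (fun x _ => hval x), Finset.sum_const, smul_eq_mul, mul_one]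
    have : univ.filter (fun x => f (vL x) (vR x) = 0) =
        univ.filter (fun x => ¬ f (vL x) (vR x) = 1) := by
      apply Finset.filter_congr
      intro x _
      rcases el_zero_or_one hf x with h | h <;> simp [h]
    rw [this]
    have := Finset.card_filter_add_card_filter_not
      (s := (univ : Finset α)) (p := fun x => f (vL x) (vR x) = 1)
    rw [Vel]
    rw [Finset.card_univ] at this
    omega
  omega

lemma Bset_le_beta : ((Bset f).card : ℤ) ≤ ∑ x, f (vS : W α) (vL x) := by
  have h1 : ∀ b ∈ Bset f, f (vS : W α) (vL b) = 1 := by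
    intro b hb
    rw [Bset, Finset.mem_filter] at hb
    have := root_src hf hb.2.1
    rw [hb.2.2] at this
    exact this
  calc ((Bset f).card : ℤ) = ∑ _b ∈ Bset f, (1 : ℤ) := by simp
  _ = ∑ b ∈ Bset f, f (vS : W α) (vL b) := Finset.sum_congr rfl (fun b hb => (h1 b hb).symm)
  _ ≤ ∑ x, f (vS : W α) (vL x) := by
      apply Finset.sum_le_sum_of_subset_of_nonneg (Finset.subset_univ _)
      intro x _ _
      exact hf.nonneg _ _

end Partition

/-! ### Mirsky decomposition of a set without long chains -/

noncomputable def hgt (S : Finset α) (x : α) : ℕ :=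
  (S.powerset.filter (fun (c : Finset α) => IsChain (· ≤ ·) (↑c : Set α) ∧ x ∈ c ∧ ∀ y ∈ c, y ≤ x)).sup
    Finset.card

lemma hgt_mem (S : Finset α) (x : α) (hx : x ∈ S) :
    ({x} : Finset α) ∈ S.powerset.filter
      (fun (c : Finset α) => IsChain (· ≤ ·) (↑c : Set α) ∧ x ∈ c ∧ ∀ y ∈ c, y ≤ x) := by
  rw [Finset.mem_filter, Finset.mem_powerset]
  refine ⟨Finset.singleton_subset_iff.mpr hx, ?_, Finset.mem_singleton_self x, ?_⟩
  · intro a ha b hb hne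
    simp only [Finset.coe_singleton, Set.mem_singleton_iff] at ha hb
    exact absurd (ha.trans hb.symm) hne
  · intro y hy
    rw [Finset.mem_singleton] at hy
    exact le_of_eq hy

lemma hgt_ge_one (S : Finset α) (x : α) (hx : x ∈ S) : 1 ≤ hgt S x := by
  unfold hgt
  have := Finset.le_sup (f := Finset.card) (hgt_mem S x hx)
  simpa using this

lemma hgt_le {k : ℕ} (S : Finset α)
    (hfree : ∀ c : Finset α, c ⊆ S → IsChain (· ≤ ·) (c : Set α) → c.card ≤ k) (x : α) :
    hgt S x ≤ k := by
  apply Finset.sup_le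
  intro c hc
  rw [Finset.mem_filter, Finset.mem_powerset] at hc
  exact hfree c hc.1 hc.2.1

lemma hgt_strict (S : Finset α) {x y : α} (hx : x ∈ S) (hy : y ∈ S) (hxy : x < y) :
    hgt S x < hgt S y := by
  have hne : (S.powerset.filter
      (fun (c : Finset α) => IsChain (· ≤ ·) (↑c : Set α) ∧ x ∈ c ∧ ∀ z ∈ c, z ≤ x)).Nonempty :=
    ⟨{x}, hgt_mem S x hx⟩
  obtain ⟨c, hc, hcval⟩ := Finset.exists_mem_eq_sup _ hne Finset.card
  rw [Finset.mem_filter, Finset.mem_powerset] at hc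
  obtain ⟨hcS, hcchain, hcx, hcle⟩ := hc
  have hyc : y ∉ c := fun h => absurd (lt_of_le_of_lt (hcle y h) hxy) (lt_irrefl y)
  have hmem : insert y c ∈ S.powerset.filter
      (fun (c : Finset α) => IsChain (· ≤ ·) (↑c : Set α) ∧ y ∈ c ∧ ∀ z ∈ c, z ≤ y) := by
    rw [Finset.mem_filter, Finset.mem_powerset]
    refine ⟨Finset.insert_subset hy hcS, ?_, Finset.mem_insert_self y c, ?_⟩
    · rw [Finset.coe_insert]
      apply hcchain.insert
      intro b hb _
      exact Or.inr (le_trans (hcle b hb) (le_of_lt hxy))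
    · intro z hz
      rcases Finset.mem_insert.mp hz with h | h
      · exact le_of_eq h
      · exact le_trans (hcle z h) (le_of_lt hxy)
  have := Finset.le_sup (f := Finset.card) hmem
  rw [Finset.card_insert_of_notMem hyc] at this
  unfold hgt
  omega

lemma mirsky (k : ℕ) (hk : 0 < k) (S : Finset α)
    (hfree : ∀ c : Finset α, c ⊆ S → IsChain (· ≤ ·) (c : Set α) → c.card ≤ k) :
    ∃ A : Fin k → Finset α, (∀ i, IsAntichain (· ≤ ·) ((A i : Finset α) : Set α)) ∧
      (Pairwise fun i j => Disjoint (A i) (A j)) ∧ (∑ i, (A i).card) = S.card := by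
  classical
  refine ⟨fun i => S.filter (fun x => hgt S x = i.val + 1), ?_, ?_, ?_⟩
  · intro i a ha b hb hne hle
    simp only [Finset.coe_filter, Set.mem_setOf_eq] at ha hb
    have hlt : a < b := lt_of_le_of_ne hle hne
    have := hgt_strict S ha.1 hb.1 hlt
    omega
  · intro i j hij
    rw [Finset.disjoint_left]
    intro x hx1 hx2
    rw [Finset.mem_filter] at hx1 hx2
    exact hij (Fin.ext (by omega))
  · set g : α → Fin k := fun x => if hx : x ∈ S then
      ⟨hgt S x - 1, by
        have h1 := hgt_ge_one S x hx
        have h2 := hgt_le S hfree x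
        omega⟩ else ⟨0, hk⟩ with hg
    have hcard := Finset.card_eq_sum_card_fiberwise
      (f := g) (s := S) (t := (univ : Finset (Fin k))) (fun x _ => Finset.mem_univ _)
    rw [hcard]
    apply Finset.sum_congr rfl
    intro i _
    congr 1
    apply Finset.filter_congr
    intro x hx
    have h1 := hgt_ge_one S x hx
    rw [hg]
    simp only [dif_pos hx, Fin.ext_iff]
    constructor
    · intro h
      omega
    · intro h
      omega

/-! ### The easy direction -/

lemma easy_direction (k : ℕ) (A : Fin k → Finset α)
    (hA : ∀ i, IsAntichain (· ≤ ·) ((A i : Finset α) : Set α))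
    (hdisj : Pairwise fun i j => Disjoint (A i) (A j))
    (𝒞 : Finset (Finset α)) (hC : ∀ C ∈ 𝒞, IsChain (· ≤ ·) (C : Set α))
    (hpart : ∀ x : α, ∃! C, C ∈ 𝒞 ∧ x ∈ C) :
    (∑ i, (A i).card) ≤ ∑ C ∈ 𝒞, min C.card k := by
  classical
  set g : α → Finset α := fun x => (hpart x).choose with hgdef
  have hg1 : ∀ x : α, g x ∈ 𝒞 ∧ x ∈ g x := fun x => (hpart x).choose_spec.1
  have hg2 : ∀ x : α, ∀ C, C ∈ 𝒞 ∧ x ∈ C → C = g x := fun x C hC' =>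
    ((hpart x).choose_spec.2 C hC')
  have hsum : ∀ i, (A i).card = ∑ C ∈ 𝒞, ((A i).filter (fun x => g x = C)).card := by
    intro i
    exact Finset.card_eq_sum_card_fiberwise (fun x _ => (hg1 x).1)
  calc (∑ i, (A i).card) = ∑ i, ∑ C ∈ 𝒞, ((A i).filter (fun x => g x = C)).card := by
        apply Finset.sum_congr rfl; intro i _; exact hsum i
  _ = ∑ C ∈ 𝒞, ∑ i, ((A i).filter (fun x => g x = C)).card := Finset.sum_comm
  _ ≤ ∑ C ∈ 𝒞, min C.card k := by
      apply Finset.sum_le_sum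
      intro C hCmem
      have hsub : ∀ i, (A i).filter (fun x => g x = C) ⊆ C := by
        intro i x hx
        rw [Finset.mem_filter] at hx
        rw [← hx.2]
        exact (hg1 x).2
      apply le_min
      · -- bounded by |C| : disjoint subsets of C
        have hdisj2 : ∀ i j : Fin k, i ≠ j →
            Disjoint ((A i).filter (fun x => g x = C)) ((A j).filter (fun x => g x = C)) := by
          intro i j hij
          exact Finset.disjoint_filter_filter (hdisj hij)
        rw [← Finset.card_biUnion (fun i _ j _ hij => hdisj2 i j hij)]
        apply Finset.card_le_card
        intro x hx
        rw [Finset.mem_biUnion] at hx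
        obtain ⟨i, _, hxi⟩ := hx
        exact hsub i hxi
      · -- bounded by k : each fiber has ≤ 1 element
        have hone : ∀ i : Fin k, ((A i).filter (fun x => g x = C)).card ≤ 1 := by
          intro i
          rw [Finset.card_le_one]
          intro a ha b hb
          rw [Finset.mem_filter] at ha hb
          by_contra hne
          have haC : a ∈ C := by rw [← ha.2]; exact (hg1 a).2
          have hbC : b ∈ C := by rw [← hb.2]; exact (hg1 b).2
          rcases hC C hCmem haC hbC hne with h | h
          · exact hA i ha.1 hb.1 hne h
          · exact hA i hb.1 ha.1 (Ne.symm hne) h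
        calc (∑ i, ((A i).filter (fun x => g x = C)).card) ≤ ∑ _i : Fin k, 1 :=
              Finset.sum_le_sum (fun i _ => hone i)
        _ = k := by simp

end GK

/-- **Greene–Kleitman theorem.** For any finite poset and any positive integer `k`,
the maximum total size of a family of `k` pairwise disjoint antichains equals the
minimum, over all chain partitions `𝒞`, of `∑ C ∈ 𝒞, min |C| k`. -/
theorem greene_kleitman {α : Type*} [Fintype α] [PartialOrder α] (k : ℕ) (hk : 0 < k) :
    sSup {m : ℕ | ∃ A : Fin k → Finset α,
        (∀ i, IsAntichain (· ≤ ·) (A i : Set α)) ∧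
        (Pairwise fun i j => Disjoint (A i) (A j)) ∧
        m = ∑ i, (A i).card} =
    sInf {m : ℕ | ∃ 𝒞 : Finset (Finset α),
        (∀ C ∈ 𝒞, IsChain (· ≤ ·) (C : Set α)) ∧
        (∀ x : α, ∃! C, C ∈ 𝒞 ∧ x ∈ C) ∧
        m = ∑ C ∈ 𝒞, min C.card k} := by
  classical
  obtain ⟨f, hf, hmin⟩ := GK.exists_min_flow (α := α) k
  have hPc := GK.part_isChain hf
  have hPu := GK.part_exists_unique hf
  obtain ⟨A₀, hA₀, hd₀, hs₀⟩ := GK.mirsky k hk (GK.Sset k f) (GK.Sset_chainfree hf hmin)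
  -- numeric inequality : cost of the partition ≤ |Sset|
  have hnum : (∑ C ∈ GK.Part f, min C.card k) ≤ (GK.Sset k f).card := by
    have h1 := GK.card_compl_le hf hmin
    have h2 := GK.card_Vel (f := f) hf hmin
    have h3 := GK.Bset_le_beta hf
    have h4 := GK.part_cost hf hk
    have h5 : ((univ : Finset α) \ GK.Sset k f).card =
        Fintype.card α - (GK.Sset k f).card := by
      rw [Finset.card_sdiff_of_subset (Finset.subset_univ _), Finset.card_univ]
    have h6 : (GK.Sset k f).card ≤ Fintype.card α := by
      rw [← Finset.card_univ]; exact Finset.card_le_card (Finset.subset_univ _)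
    have h7 : (GK.Vel f).card ≤ Fintype.card α := by
      rw [← Finset.card_univ]; exact Finset.card_le_card (Finset.subset_univ _)
    -- move to ℤ
    have h3' : (k : ℤ) * ((GK.Bset f).card : ℤ) ≤ (k : ℤ) * (∑ x, f (GK.vS : GK.W α) (GK.vL x)) :=
      mul_le_mul_of_nonneg_left h3 (by positivity)
    have h1' : ((Fintype.card α : ℤ) - ((GK.Sset k f).card : ℤ)) ≤
        ((GK.Vel f).card : ℤ) - (k : ℤ) * (∑ x, f (GK.vS : GK.W α) (GK.vL x)) := by
      rw [h5] at h1
      rw [← h2] at h1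
      have : ((Fintype.card α - (GK.Sset k f).card : ℕ) : ℤ) =
          (Fintype.card α : ℤ) - ((GK.Sset k f).card : ℤ) := by
        rw [Nat.cast_sub h6]
      omega
    have h4' : ((∑ C ∈ GK.Part f, min C.card k : ℕ) : ℤ) ≤
        ((Fintype.card α : ℤ) - ((GK.Vel f).card : ℤ)) + (k : ℤ) * ((GK.Bset f).card : ℤ) := by
      have : ((Fintype.card α - (GK.Vel f).card : ℕ) : ℤ) =
          (Fintype.card α : ℤ) - ((GK.Vel f).card : ℤ) := by
        rw [Nat.cast_sub h7]
      calc ((∑ C ∈ GK.Part f, min C.card k : ℕ) : ℤ) ≤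
          (((Fintype.card α - (GK.Vel f).card) + k * (GK.Bset f).card : ℕ) : ℤ) := by
            exact_mod_cast h4
      _ = ((Fintype.card α : ℤ) - ((GK.Vel f).card : ℤ)) + (k : ℤ) * ((GK.Bset f).card : ℤ) := by
            push_cast
            omega
    have : ((∑ C ∈ GK.Part f, min C.card k : ℕ) : ℤ) ≤ ((GK.Sset k f).card : ℤ) := by
      linarith
    exact_mod_cast this
  -- membership facts
  have hm₁ : (∑ C ∈ GK.Part f, min C.card k) ∈ {m : ℕ | ∃ 𝒞 : Finset (Finset α),
      (∀ C ∈ 𝒞, IsChain (· ≤ ·) (C : Set α)) ∧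
      (∀ x : α, ∃! C, C ∈ 𝒞 ∧ x ∈ C) ∧
      m = ∑ C ∈ 𝒞, min C.card k} := ⟨GK.Part f, hPc, hPu, rfl⟩
  have hm₀ : (GK.Sset k f).card ∈ {m : ℕ | ∃ A : Fin k → Finset α,
      (∀ i, IsAntichain (· ≤ ·) (A i : Set α)) ∧
      (Pairwise fun i j => Disjoint (A i) (A j)) ∧
      m = ∑ i, (A i).card} := ⟨A₀, hA₀, hd₀, hs₀.symm⟩
  have heasy : ∀ n ∈ {m : ℕ | ∃ A : Fin k → Finset α,
      (∀ i, IsAntichain (· ≤ ·) (A i : Set α)) ∧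
      (Pairwise fun i j => Disjoint (A i) (A j)) ∧
      m = ∑ i, (A i).card}, ∀ m' ∈ {m : ℕ | ∃ 𝒞 : Finset (Finset α),
      (∀ C ∈ 𝒞, IsChain (· ≤ ·) (C : Set α)) ∧
      (∀ x : α, ∃! C, C ∈ 𝒞 ∧ x ∈ C) ∧
      m = ∑ C ∈ 𝒞, min C.card k}, n ≤ m' := by
    rintro n ⟨A, hA, hd, rfl⟩ m' ⟨𝒞, hC, hp, rfl⟩
    exact GK.easy_direction k A hA hd 𝒞 hC hp
  have hNne : (0 : ℕ) ∈ {m : ℕ | ∃ A : Fin k → Finset α,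
      (∀ i, IsAntichain (· ≤ ·) (A i : Set α)) ∧
      (Pairwise fun i j => Disjoint (A i) (A j)) ∧
      m = ∑ i, (A i).card} := by
    refine ⟨fun _ => ∅, fun i => ?_, fun i j _ => Finset.disjoint_empty_left _, by simp⟩
    intro a ha
    simp at ha
  have hbdd : BddAbove {m : ℕ | ∃ A : Fin k → Finset α,
      (∀ i, IsAntichain (· ≤ ·) (A i : Set α)) ∧
      (Pairwise fun i j => Disjoint (A i) (A j)) ∧
      m = ∑ i, (A i).card} :=
    ⟨∑ C ∈ GK.Part f, min C.card k, fun n hn => heasy n hn _ hm₁⟩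
  apply le_antisymm
  · apply csSup_le ⟨0, hNne⟩
    intro n hn
    apply le_csInf ⟨_, hm₁⟩
    intro m' hm'
    exact heasy n hn m' hm'
  · calc sInf _ ≤ ∑ C ∈ GK.Part f, min C.card k := Nat.sInf_le hm₁
    _ ≤ (GK.Sset k f).card := hnum
    _ ≤ sSup _ := le_csSup hbdd hm₀
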